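/- arXiv:1510.08722 — 7 statements merged into one kernel-verified Lean document; each statement's English description precedes it below -/
import Mathlib

section
/- In an ordered assembly, if y is positive (i.e. e(y) ≤ y), then y ≤ e(x) if and only if e(x) + y = e(x). -/
structure Assembly (A : Type*) where
  add : A → A → A
  e : A → A
  neg : A → A
  add_assoc : ∀ x y z, add x (add y z) = add (add x y) z
  add_comm : ∀ x y, add x y = add y x
  add_e : ∀ x, add x (e x) = x
  e_max : ∀ x f, add x f = x → add (e x) f = e x
  add_neg : ∀ x, add x (neg x) = e x
  e_neg : ∀ x, e (neg x) = e x
  e_add : ∀ x y, e (add x y) = e x ∨ e (add x y) = e y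

structure OrderedAssembly (A : Type*) extends Assembly A where
  le : A → A → Prop
  le_refl : ∀ x, le x x
  le_antisymm : ∀ x y, le x y → le y x → x = y
  le_trans : ∀ x y z, le x y → le y z → le x z
  le_total : ∀ x y, le x y ∨ le y x
  add_le_add : ∀ x y z, le x y → le (add x z) (add y z)
  le_e : ∀ x y, add y (e x) = e x → le y (e x) ∧ le (neg y) (e x)

lemma Assembly.e_idem {A : Type*} (S : Assembly A) (x : A) :
    S.add (S.e x) (S.e x) = S.e x := S.e_max x (S.e x) (S.add_e x)

lemma Assembly.e_e {A : Type*} (S : Assembly A) (x : A) :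
    S.e (S.e x) = S.e x := by
  have h2 : S.add (S.e (S.e x)) (S.e x) = S.e (S.e x) :=
    S.e_max (S.e x) (S.e x) (S.e_idem x)
  have h3 : S.add (S.e x) (S.e (S.e x)) = S.e x := S.add_e (S.e x)
  rw [S.add_comm] at h3
  rw [h2] at h3
  exact h3

lemma Assembly.e_dichotomy {A : Type*} (S : Assembly A) (x y : A) :
    S.add (S.e x) (S.e y) = S.e x ∨ S.add (S.e x) (S.e y) = S.e y := by
  set z := S.add (S.e x) (S.e y) with hz
  have zz : S.add z z = z := by
    calc S.add z z = S.add (S.add (S.add (S.e x) (S.e y)) (S.e x)) (S.e y) := by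
          rw [hz, S.add_assoc]
      _ = S.add (S.add (S.e x) (S.add (S.e x) (S.e y))) (S.e y) := by
          rw [S.add_comm (S.add (S.e x) (S.e y))]
      _ = S.add (S.add (S.add (S.e x) (S.e x)) (S.e y)) (S.e y) := by
          rw [S.add_assoc]
      _ = S.add (S.add (S.e x) (S.e y)) (S.e y) := by rw [S.e_idem]
      _ = S.add (S.e x) (S.add (S.e y) (S.e y)) := by rw [S.add_assoc]
      _ = z := by rw [S.e_idem, hz]
  have h1 : S.add (S.e z) z = S.e z := S.e_max z z zz
  have h2 : S.add z (S.e z) = z := S.add_e z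
  rw [S.add_comm, h1] at h2
  have := S.e_add (S.e x) (S.e y)
  rw [S.e_e, S.e_e, ← hz, h2] at this
  exact this

theorem stmt5 {A : Type*} (S : OrderedAssembly A) (x y : A)
    (hy : S.le (S.e y) y) :
    S.le y (S.e x) ↔ S.add (S.e x) y = S.e x := by
  constructor
  · intro h
    have hey : S.le (S.e y) (S.e x) := S.le_trans _ _ _ hy h
    have hzx : S.add (S.e x) (S.e y) = S.e x := by
      rcases S.e_dichotomy x y with h1 | h1
      · exact h1
      · have := (S.le_e y (S.e x) h1).1
        have heq := S.le_antisymm _ _ this hey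
        rw [h1, heq]
    -- upper: e x + y ≤ e x
    have hup : S.le (S.add (S.e x) y) (S.e x) := by
      have := S.add_le_add y (S.e x) (S.e x) h
      rw [S.e_idem, S.add_comm] at this
      exact this
    have hlo : S.le (S.e x) (S.add (S.e x) y) := by
      have := S.add_le_add (S.e y) y (S.e x) hy
      rw [S.add_comm (S.e y), S.add_comm y] at this
      rw [hzx] at this
      exact this
    exact S.le_antisymm _ _ hup hlo
  · intro h
    rw [S.add_comm] at h
    exact (S.le_e x y h).1
end

section
/- In a solid, the product of two elements is a magnitude if and only if at least one factor is a magnitude: x·y = e(x·y) iff x = e(x) or y = e(y). -/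
structure Solid (A : Type*) extends OrderedAssembly A where
  mul : A → A → A
  u : A → A
  inv : A → A
  mul_assoc : ∀ x y z, mul x (mul y z) = mul (mul x y) z
  mul_comm : ∀ x y, mul x y = mul y x
  mul_u : ∀ x, x ≠ e x → mul x (u x) = x
  u_max : ∀ x, x ≠ e x → ∀ v, mul x v = x → mul (u x) v = u x
  mul_inv : ∀ x, x ≠ e x → mul x (inv x) = u x
  u_inv : ∀ x, x ≠ e x → u (inv x) = u x
  u_mul : ∀ x y, x ≠ e x → y ≠ e y →
    u (mul x y) = u x ∨ u (mul x y) = u y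
  compat_mul : ∀ x y z, le (e x) x → e x ≠ x → le y z → le (mul x y) (mul x z)
  amplification : ∀ x y z, le (e y) y → le y z → le (mul (e x) y) (mul (e x) z)
  escala : ∀ x y, ∃ z, mul (e x) y = e z
  e_mul : ∀ x y, e (mul x y) = add (mul (e x) y) (mul (e y) x)
  e_u : ∀ x, x ≠ e x → e (u x) = mul (e x) (inv x)
  dist : ∀ x y z, add (mul x y) (mul x z) =
    add (add (mul x (add y z)) (mul (e x) y)) (mul (e x) z)
  neg_mul : ∀ x y, neg (mul x y) = mul (neg x) y
  zero : A
  add_zero : ∀ x, add x zero = x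
  one : A
  one_mul : ∀ x, mul one x = x
  M : A
  e_add_M : ∀ x, add (e x) M = M
  exists_neutrix : ∃ x, e x ≠ zero ∧ e x ≠ M
  decomp : ∀ x, ∃ a, x = add a (e x) ∧ e a = zero
  dense : ∀ x y, x = e x → y = e y → le x y → x ≠ y →
    ∃ z, z ≠ e z ∧ le x z ∧ x ≠ z ∧ le z y ∧ z ≠ y

namespace SolidLemmas

variable {A : Type*} (S : Solid A)

local infixl:65 " ⊹ " => S.add
local infixl:70 " ⨳ " => S.mul
local infix:50 " ≼ " => S.le

/-- e is idempotent -/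
lemma e_e (x : A) : S.e (S.e x) = S.e x := by
  have h2 : S.e x ⊹ S.e x = S.e x := S.e_max x (S.e x) (S.add_e x)
  have h3 : S.e (S.e x) ⊹ S.e x = S.e (S.e x) := S.e_max (S.e x) (S.e x) h2
  have h4 : S.e x ⊹ S.e (S.e x) = S.e x := S.add_e (S.e x)
  rw [S.add_comm] at h3
  rw [← h3, h4]

lemma mag_of_eq_e {x y : A} (h : x = S.e y) : x = S.e x := by
  rw [h, e_e]

/-- product with a magnitude (on the left) is a magnitude -/
lemma mag_mul {x : A} (hx : x = S.e x) (y : A) : x ⨳ y = S.e (x ⨳ y) := by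
  obtain ⟨z, hz⟩ := S.escala x y
  apply mag_of_eq_e S (y := z)
  rw [hx]; exact hz

lemma mag_mul' {y : A} (hy : y = S.e y) (x : A) : x ⨳ y = S.e (x ⨳ y) := by
  rw [S.mul_comm]; exact mag_mul S hy x

lemma mag_add_self {x : A} (hx : x = S.e x) : x ⊹ x = x := by
  have h := S.add_e x
  rw [← hx] at h
  exact h

/-- sum of magnitudes equals one of them -/
lemma mag_add_cases {x y : A} (hx : x = S.e x) (hy : y = S.e y) :
    x ⊹ y = x ∨ x ⊹ y = y := by
  rcases S.e_add x y with h | h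
  · left
    have hs : (x ⊹ y) ⊹ y = x ⊹ y := by
      rw [← S.add_assoc, mag_add_self S hy]
    have := S.e_max (x ⊹ y) y hs
    rw [h, ← hx] at this
    exact this
  · right
    have hs : (x ⊹ y) ⊹ x = x ⊹ y := by
      rw [S.add_comm x y, ← S.add_assoc, mag_add_self S hx, S.add_comm]
    have := S.e_max (x ⊹ y) x hs
    rw [h, ← hy] at this
    rw [S.add_comm]
    exact this

lemma mag_add {x y : A} (hx : x = S.e x) (hy : y = S.e y) :
    x ⊹ y = S.e (x ⊹ y) := by
  rcases mag_add_cases S hx hy with h | h <;> rw [h]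
  · exact hx
  · exact hy

lemma zero_mag : S.zero = S.e S.zero := by
  have h1 : S.e S.zero ⊹ S.zero = S.zero := by
    rw [S.add_comm]; exact S.add_e S.zero
  have h2 : S.e S.zero ⊹ S.zero = S.e S.zero := S.add_zero (S.e S.zero)
  exact h1.symm.trans h2

lemma zero_le_mag {x : A} (hx : x = S.e x) : S.zero ≼ x := by
  have h : S.zero ⊹ S.e x = S.e x := by
    rw [S.add_comm]; rw [← hx]; exact S.add_zero x
  have := (S.le_e x S.zero h).1
  rw [← hx] at this; exact this

lemma add_le_add_left {x y : A} (z : A) (h : x ≼ y) : z ⊹ x ≼ z ⊹ y := by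
  have := S.add_le_add x y z h
  rw [S.add_comm x z, S.add_comm y z] at this
  exact this

/-- padding: t ≤ t + N for N a magnitude -/
lemma le_add_mag (t : A) {n : A} (hn : n = S.e n) : t ≼ t ⊹ n := by
  have h := add_le_add_left S t (zero_le_mag S hn)
  rw [S.add_zero t] at h
  exact h

/-- collapse: both summands below a magnitude -/
lemma add_le_mag {x y n : A} (hn : n = S.e n) (hx : x ≼ n) (hy : y ≼ n) :
    x ⊹ y ≼ n := by
  have h1 : x ⊹ y ≼ n ⊹ y := S.add_le_add x n y hx
  have h2 : n ⊹ y ≼ n ⊹ n := add_le_add_left S n hy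
  rw [mag_add_self S hn] at h2
  exact S.le_trans _ _ _ h1 h2

lemma neg_mag {x : A} (hx : x = S.e x) : S.neg x = x := by
  obtain ⟨a, ha, _⟩ := S.decomp (S.neg x)
  have he : S.e (S.neg x) = x := by rw [S.e_neg, ← hx]
  have ha' : S.neg x = a ⊹ x := by rw [ha, he]
  have h1 : x ⊹ S.neg x = x := by
    have := S.add_neg x; rw [← hx] at this; exact this
  have h2 : x ⊹ S.neg x = S.neg x := by
    calc x ⊹ S.neg x = x ⊹ (a ⊹ x) := by rw [ha']
    _ = (x ⊹ a) ⊹ x := S.add_assoc x a x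
    _ = (a ⊹ x) ⊹ x := by rw [S.add_comm x a]
    _ = a ⊹ (x ⊹ x) := (S.add_assoc a x x).symm
    _ = a ⊹ x := by rw [mag_add_self S hx]
    _ = S.neg x := ha'.symm
  exact h2.symm.trans h1

lemma neg_le_of_pos {x : A} (hp : S.e x ≼ x) : S.neg x ≼ S.e x := by
  have h := S.add_le_add (S.e x) x (S.neg x) hp
  rw [S.add_neg x] at h
  have h2 : S.e x ⊹ S.neg x = S.neg x := by
    rw [S.add_comm, ← S.e_neg x]; exact S.add_e (S.neg x)
  rw [h2] at h
  exact h

lemma pos_neg_of_neg {x : A} (h : x ≼ S.e x) : S.e x ≼ S.neg x := by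
  have h1 := S.add_le_add x (S.e x) (S.neg x) h
  rw [S.add_neg x] at h1
  have h2 : S.e x ⊹ S.neg x = S.neg x := by
    rw [S.add_comm, ← S.e_neg x]; exact S.add_e _
  rw [h2] at h1; exact h1

lemma neg_zeroless {x : A} (hx : x ≠ S.e x) : S.neg x ≠ S.e (S.neg x) := by
  intro h
  rw [S.e_neg] at h
  apply hx
  have h1 := S.add_neg x
  rw [h, S.add_e x] at h1
  exact h1

lemma mul_one (x : A) : x ⨳ S.one = x := by
  rw [S.mul_comm]; exact S.one_mul x

lemma mul_left_comm (a b c : A) : a ⨳ (b ⨳ c) = b ⨳ (a ⨳ c) := by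
  rw [S.mul_assoc, S.mul_comm a b, ← S.mul_assoc]

lemma add_left_comm (a b c : A) : a ⊹ (b ⊹ c) = b ⊹ (a ⊹ c) := by
  rw [S.add_assoc, S.add_comm a b, ← S.add_assoc]

lemma u_zeroless {t : A} (ht : t ≠ S.e t) : S.u t ≠ S.e (S.u t) := by
  intro h
  apply ht
  have h1 : t = t ⨳ S.e (S.u t) := by
    conv_lhs => rw [← S.mul_u t ht]
    rw [← h]
  have h2 : t ⨳ S.e (S.u t) = S.e (t ⨳ S.e (S.u t)) :=
    mag_mul' S (e_e S (S.u t)).symm t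
  exact mag_of_eq_e S (h1.trans h2)

lemma u_self {t : A} (ht : t ≠ S.e t) : S.u t ⨳ S.u t = S.u t :=
  S.u_max t ht (S.u t) (S.mul_u t ht)

lemma u_u {t : A} (ht : t ≠ S.e t) : S.u (S.u t) = S.u t := by
  have hu := u_zeroless S ht
  have h2 : S.u (S.u t) ⨳ S.u t = S.u (S.u t) :=
    S.u_max (S.u t) hu (S.u t) (u_self S ht)
  have h3 : S.u t ⨳ S.u (S.u t) = S.u t := S.mul_u (S.u t) hu
  exact h2.symm.trans ((S.mul_comm _ _).trans h3)

lemma inv_zeroless {t : A} (ht : t ≠ S.e t) : S.inv t ≠ S.e (S.inv t) := by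
  intro h
  apply u_zeroless S ht
  have h1 : S.u t = t ⨳ S.e (S.inv t) := by
    rw [← h]; exact (S.mul_inv t ht).symm
  have h2 : t ⨳ S.e (S.inv t) = S.e (t ⨳ S.e (S.inv t)) :=
    mag_mul' S (e_e S (S.inv t)).symm t
  exact mag_of_eq_e S (h1.trans h2)

lemma I1 {t : A} (ht : t ≠ S.e t) : S.e t ⨳ S.u t = S.e t := by
  have hX : S.e t ⨳ S.u t = S.e (S.e t ⨳ S.u t) := mag_mul S (e_e S t).symm (S.u t)
  have hI : S.e (S.u t) ⨳ t = S.e t ⨳ S.u t := by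
    rw [S.e_u t ht]
    calc (S.e t ⨳ S.inv t) ⨳ t = S.e t ⨳ (S.inv t ⨳ t) := (S.mul_assoc _ _ _).symm
    _ = S.e t ⨳ (t ⨳ S.inv t) := by rw [S.mul_comm (S.inv t) t]
    _ = S.e t ⨳ S.u t := by rw [S.mul_inv t ht]
  have he : S.e t = (S.e t ⨳ S.u t) ⊹ (S.e t ⨳ S.u t) := by
    have h1 := S.e_mul t (S.u t)
    rw [S.mul_u t ht, hI] at h1
    exact h1
  rw [mag_add_self S hX] at he
  exact he.symm

lemma I2 {t : A} (ht : t ≠ S.e t) : S.e (S.u t) ⨳ t = S.e t := by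
  have hI : S.e (S.u t) ⨳ t = S.e t ⨳ S.u t := by
    rw [S.e_u t ht]
    calc (S.e t ⨳ S.inv t) ⨳ t = S.e t ⨳ (S.inv t ⨳ t) := (S.mul_assoc _ _ _).symm
    _ = S.e t ⨳ (t ⨳ S.inv t) := by rw [S.mul_comm (S.inv t) t]
    _ = S.e t ⨳ S.u t := by rw [S.mul_inv t ht]
  rw [hI]; exact I1 S ht

lemma I4 {t : A} (ht : t ≠ S.e t) : S.e (S.u t) ⨳ S.inv t = S.e (S.inv t) := by
  have h := I2 S (inv_zeroless S ht)
  rw [S.u_inv t ht] at h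
  exact h

lemma I5 {t : A} (ht : t ≠ S.e t) : t ⨳ S.e (S.inv t) = S.e (S.u t) := by
  have hu := u_zeroless S ht
  calc t ⨳ S.e (S.inv t) = t ⨳ (S.e (S.u t) ⨳ S.inv t) := by rw [I4 S ht]
  _ = S.e (S.u t) ⨳ (t ⨳ S.inv t) := mul_left_comm S t _ _
  _ = S.e (S.u t) ⨳ S.u t := by rw [S.mul_inv t ht]
  _ = S.e (S.u t) := by
      have := I1 S hu
      rw [u_u S ht] at this
      exact this

lemma u_pos {t : A} (ht : t ≠ S.e t) (hp : S.e t ≼ t) : S.e (S.u t) ≼ S.u t := by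
  rcases S.le_total (S.e (S.u t)) (S.u t) with h | h
  · exact h
  · exfalso
    have hc := S.compat_mul t (S.u t) (S.e (S.u t)) hp (Ne.symm ht) h
    rw [S.mul_u t ht] at hc
    have h2 : t ⨳ S.e (S.u t) = S.e t := by
      rw [S.mul_comm]; exact I2 S ht
    rw [h2] at hc
    exact ht (S.le_antisymm t (S.e t) hc hp)

lemma F_le_one {t : A} (ht : t ≠ S.e t) (hp : S.e t ≼ t) : S.e (S.u t) ≼ S.one := by
  rcases S.le_total (S.e (S.u t)) S.one with h | h
  · exact h
  · exfalso
    have hc := S.compat_mul t S.one (S.e (S.u t)) hp (Ne.symm ht) h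
    rw [mul_one S t] at hc
    have h2 : t ⨳ S.e (S.u t) = S.e t := by
      rw [S.mul_comm]; exact I2 S ht
    rw [h2] at hc
    exact ht (S.le_antisymm t (S.e t) hc hp)

lemma two_le_u_false {t : A} (ht : t ≠ S.e t) (hp : S.e t ≼ t)
    (h : S.one ⊹ S.one ≼ S.u t) : False := by
  have h1 := S.compat_mul t (S.one ⊹ S.one) (S.u t) hp (Ne.symm ht) h
  rw [S.mul_u t ht] at h1
  have hd := S.dist t S.one S.one
  rw [mul_one S t, mul_one S (S.e t)] at hd
  have hd2 : t ⊹ t = t ⨳ (S.one ⊹ S.one) ⊹ S.e t := by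
    rw [hd, ← S.add_assoc, mag_add_self S (e_e S t).symm]
  have hle : t ⊹ t ≼ t := by
    rw [hd2]
    have := S.add_le_add (t ⨳ (S.one ⊹ S.one)) t (S.e t) h1
    rw [S.add_e t] at this
    exact this
  have hge : t ≼ t ⊹ t := by
    have := add_le_add_left S t hp
    rw [S.add_e t] at this
    exact this
  have heq : t ⊹ t = t := S.le_antisymm _ _ hle hge
  have h2 := S.e_max t t heq
  have h3 : t ⊹ S.e t = S.e t := by rw [S.add_comm]; exact h2
  have h4 := (S.le_e t t h3).1
  exact ht (S.le_antisymm t (S.e t) h4 hp)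

lemma inv_pos {t : A} (ht : t ≠ S.e t) (hp : S.e t ≼ t) :
    S.e (S.inv t) ≼ S.inv t := by
  rcases S.le_total (S.e (S.inv t)) (S.inv t) with h | h
  · exact h
  · exfalso
    have hc := S.compat_mul t (S.inv t) (S.e (S.inv t)) hp (Ne.symm ht) h
    rw [S.mul_inv t ht, I5 S ht] at hc
    exact u_zeroless S ht (S.le_antisymm _ _ hc (u_pos S ht hp))

lemma e_one_mul_le (t : A) : S.e S.one ⨳ t ≼ S.e t := by
  have h1 := S.e_mul S.one t
  rw [S.one_mul t, mul_one S (S.e t)] at h1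
  have h2 : (S.e S.one ⨳ t) ⊹ S.e t = S.e t := h1.symm
  exact (S.le_e t (S.e S.one ⨳ t) h2).1

lemma mul_two_le {n : A} (hn : n = S.e n) : n ⨳ (S.one ⊹ S.one) ≼ n := by
  have hd := S.dist n S.one S.one
  rw [mul_one S n] at hd
  have hen : S.e n ⨳ S.one = n := by rw [mul_one S (S.e n), ← hn]
  rw [hen] at hd
  -- hd : n ⊹ n = (n ⨳ (1+1) ⊹ n) ⊹ n
  have hd2 : n = n ⨳ (S.one ⊹ S.one) ⊹ n := by
    have h3 : n ⊹ n = n ⨳ (S.one ⊹ S.one) ⊹ (n ⊹ n) := by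
      conv_lhs => rw [hd]
      rw [← S.add_assoc]
    rw [mag_add_self S hn] at h3
    exact h3
  have h4 : n ⨳ (S.one ⊹ S.one) ⊹ S.e n = S.e n := by
    rw [← hn]; exact hd2.symm
  have := (S.le_e n (n ⨳ (S.one ⊹ S.one)) h4).1
  rw [← hn] at this
  exact this

lemma mul_neg (x y : A) : x ⨳ S.neg y = S.neg (x ⨳ y) := by
  rw [S.mul_comm x (S.neg y), ← S.neg_mul y x, S.mul_comm y x]

lemma I1w {y : A} (hy : y ≠ S.e y) : S.e (S.u y) ⨳ S.u y = S.e (S.u y) := by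
  have h := I1 S (u_zeroless S hy)
  rw [u_u S hy] at h
  exact h

/-- The core contradiction: positive zeroless x, y with x*y = e x * y. -/
lemma core {x y : A} (hpone : S.e S.one ≼ S.one)
    (hx : x ≠ S.e x) (hpx : S.e x ≼ x) (hy : y ≠ S.e y) (hpy : S.e y ≼ y)
    (h : x ⨳ y = S.e x ⨳ y) : False := by
  have hw : S.u y ≠ S.e (S.u y) := u_zeroless S hy
  have hpw : S.e (S.u y) ≼ S.u y := u_pos S hy hpy
  have hFone : S.e (S.u y) ≼ S.one := F_le_one S hy hpy
  have hFmag : S.e (S.u y) = S.e (S.e (S.u y)) := (e_e S (S.u y)).symm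
  have hexmag : S.e x = S.e (S.e x) := (e_e S x).symm
  have heymag : S.e y = S.e (S.e y) := (e_e S y).symm
  have hzone : S.zero ≼ S.one := S.le_trans _ _ _ (zero_le_mag S (e_e S S.one).symm) hpone
  have hone2 : S.one ≼ S.one ⊹ S.one := by
    have h1 := S.add_le_add S.zero S.one S.one hzone
    have h2 : S.zero ⊹ S.one = S.one := by rw [S.add_comm]; exact S.add_zero S.one
    rw [h2] at h1; exact h1
  -- h2 : x * u y = e x * u y
  have h2 : x ⨳ S.u y = S.e x ⨳ S.u y := by
    have hc := congrArg (fun z => z ⨳ S.inv y) h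
    rw [← S.mul_assoc, ← S.mul_assoc, S.mul_inv y hy] at hc
    exact hc
  -- u y ≤ 1+1 (else y+y contradiction)
  have hw2 : S.u y ≼ S.one ⊹ S.one := by
    rcases S.le_total (S.one ⊹ S.one) (S.u y) with hle | hle
    · exact absurd hle (fun hle => two_le_u_false S hy hpy hle)
    · exact hle
  -- P := x * u y ≤ e x
  have hPex : x ⨳ S.u y ≼ S.e x := by
    rw [h2]
    have ha := S.amplification x (S.u y) (S.one ⊹ S.one) hpw hw2
    exact S.le_trans _ _ _ ha (mul_two_le S hexmag)
  have hGP : x ⨳ S.e (S.u y) ≼ x ⨳ S.u y :=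
    S.compat_mul x (S.e (S.u y)) (S.u y) hpx (Ne.symm hx) hpw
  have hGe : x ⨳ S.e (S.u y) ≼ S.e x := S.le_trans _ _ _ hGP hPex
  have he1x : x ⨳ S.e S.one ≼ S.e x := by
    rw [S.mul_comm]; exact e_one_mul_le S x
  -- contradiction whenever one ≤ u y
  have honew : S.one ≼ S.u y → False := by
    intro hone
    have hc := S.compat_mul x S.one (S.u y) hpx (Ne.symm hx) hone
    rw [mul_one S x] at hc
    exact hx (S.le_antisymm _ _ (S.le_trans _ _ _ hc hPex) hpx)
  -- contradiction whenever one ≤ u y + e one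
  have hkill : S.one ≼ S.u y ⊹ S.e S.one → False := by
    intro hone
    have hc := S.compat_mul x S.one (S.u y ⊹ S.e S.one) hpx (Ne.symm hx) hone
    rw [mul_one S x] at hc
    have hd := S.dist x (S.u y) (S.e S.one)
    have hup : x ⨳ (S.u y ⊹ S.e S.one) ≼ x ⨳ S.u y ⊹ x ⨳ S.e S.one := by
      have p1 : x ⨳ (S.u y ⊹ S.e S.one) ≼
          (x ⨳ (S.u y ⊹ S.e S.one) ⊹ S.e x ⨳ S.u y) ⊹ S.e x ⨳ S.e S.one :=
        S.le_trans _ _ _ (le_add_mag S _ (mag_mul S hexmag (S.u y)))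
          (le_add_mag S _ (mag_mul S hexmag (S.e S.one)))
      rw [← hd] at p1
      exact p1
    have hsum : x ⨳ S.u y ⊹ x ⨳ S.e S.one ≼ S.e x :=
      add_le_mag S hexmag hPex he1x
    exact hx (S.le_antisymm _ _
      (S.le_trans _ _ _ hc (S.le_trans _ _ _ hup hsum)) hpx)
  rcases S.le_total S.one (S.u y) with hone | hw1
  · exact honew hone
  -- CASE (b) : u y ≤ one ; d := one + neg (u y)
  · have hwd : S.u y ⊹ (S.one ⊹ S.neg (S.u y)) = S.one ⊹ S.e (S.u y) := by
      rw [add_left_comm S (S.u y) S.one (S.neg (S.u y)), S.add_neg (S.u y)]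
    have hFd : S.e (S.u y) ≼ S.one ⊹ S.neg (S.u y) := by
      have h1 := S.add_le_add (S.u y) S.one (S.neg (S.u y)) hw1
      rw [S.add_neg (S.u y)] at h1
      exact h1
    have hdW : S.one ⊹ S.neg (S.u y) ≼ S.one ⊹ S.e (S.u y) :=
      add_le_add_left S S.one (neg_le_of_pos S hpw)
    have honeW : S.one ≼ S.one ⊹ S.e (S.u y) := le_add_mag S S.one hFmag
    have hW2 : S.one ⊹ S.e (S.u y) ≼ S.one ⊹ S.one := add_le_add_left S S.one hFone
    -- y ⨳ d ⊹ e y = e y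
    have hyd : y ⨳ (S.one ⊹ S.neg (S.u y)) ⊹ S.e y = S.e y := by
      have hd := S.dist y S.one (S.neg (S.u y))
      have p1 : y ⨳ S.one = y := mul_one S y
      have p2 : y ⨳ S.neg (S.u y) = S.neg y := by
        rw [mul_neg S y (S.u y), S.mul_u y hy]
      have p3 : S.e y ⨳ S.one = S.e y := mul_one S (S.e y)
      have p4 : S.e y ⨳ S.neg (S.u y) = S.e y := by
        rw [mul_neg S (S.e y) (S.u y), I1 S hy, neg_mag S heymag]
      rw [p1, p2, p3, p4, S.add_neg y, ← S.add_assoc, mag_add_self S heymag] at hd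
      exact hd.symm
    have hyd_le : y ⨳ (S.one ⊹ S.neg (S.u y)) ≼ S.e y := (S.le_e y _ hyd).1
    -- u y ⨳ d = e (u y)
    have hwdF : S.u y ⨳ (S.one ⊹ S.neg (S.u y)) = S.e (S.u y) := by
      have hd := S.dist (S.u y) S.one (S.neg (S.u y))
      have p1 : S.u y ⨳ S.one = S.u y := mul_one S (S.u y)
      have p2 : S.u y ⨳ S.neg (S.u y) = S.neg (S.u y) := by
        rw [mul_neg S (S.u y) (S.u y), u_self S hy]
      have p3 : S.e (S.u y) ⨳ S.one = S.e (S.u y) := mul_one S _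
      have p4 : S.e (S.u y) ⨳ S.neg (S.u y) = S.e (S.u y) := by
        rw [mul_neg S _ (S.u y), I1w S hy, neg_mag S hFmag]
      rw [p1, p2, p3, p4, S.add_neg (S.u y), ← S.add_assoc,
        mag_add_self S hFmag] at hd
      have hle : S.u y ⨳ (S.one ⊹ S.neg (S.u y)) ≼ S.e (S.u y) :=
        (S.le_e (S.u y) _ hd.symm).1
      have hge : S.e (S.u y) ≼ S.u y ⨳ (S.one ⊹ S.neg (S.u y)) := by
        have hc := S.compat_mul (S.u y) (S.e (S.u y)) (S.one ⊹ S.neg (S.u y))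
          hpw (Ne.symm hw) hFd
        have hq : S.u y ⨳ S.e (S.u y) = S.e (S.u y) := by
          rw [S.mul_comm]; exact I1w S hy
        rw [hq] at hc; exact hc
      exact S.le_antisymm _ _ hle hge
    -- x ⨳ F = e x ⨳ F
    have hxF : x ⨳ S.e (S.u y) = S.e x ⨳ S.e (S.u y) := by
      have hc := congrArg (fun z => z ⨳ (S.one ⊹ S.neg (S.u y))) h2
      rw [← S.mul_assoc, ← S.mul_assoc, hwdF] at hc
      exact hc
    -- x ⨳ (one ⊹ F) = x
    have hxW : x ⨳ (S.one ⊹ S.e (S.u y)) = x := by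
      have hge : x ≼ x ⨳ (S.one ⊹ S.e (S.u y)) := by
        have hc := S.compat_mul x S.one (S.one ⊹ S.e (S.u y)) hpx (Ne.symm hx) honeW
        rw [mul_one S x] at hc; exact hc
      have hle : x ⨳ (S.one ⊹ S.e (S.u y)) ≼ x := by
        have hd := S.dist x S.one (S.e (S.u y))
        rw [mul_one S x, mul_one S (S.e x)] at hd
        have p1 : x ⨳ (S.one ⊹ S.e (S.u y)) ≼
            (x ⨳ (S.one ⊹ S.e (S.u y)) ⊹ S.e x) ⊹ S.e x ⨳ S.e (S.u y) :=
          S.le_trans _ _ _ (le_add_mag S _ hexmag)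
            (le_add_mag S _ (mag_mul S hexmag (S.e (S.u y))))
        rw [← hd] at p1
        have p2 : x ⊹ x ⨳ S.e (S.u y) ≼ x := by
          have q := add_le_add_left S x hGe
          rw [S.add_e x] at q; exact q
        exact S.le_trans _ _ _ p1 p2
      exact S.le_antisymm _ _ hle hge
    by_cases hdE : (S.one ⊹ S.neg (S.u y)) ≼ S.e (S.one ⊹ S.neg (S.u y))
    · have hed := S.e_add S.one (S.neg (S.u y))
      rw [S.e_neg (S.u y)] at hed
      rcases hed with hed | hed
      · rw [hed] at hdE
        apply hkill
        have h1 : S.u y ⊹ (S.one ⊹ S.neg (S.u y)) ≼ S.u y ⊹ S.e S.one :=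
          add_le_add_left S (S.u y) hdE
        rw [hwd] at h1
        exact S.le_trans _ _ _ honeW h1
      · rw [hed] at hdE
        apply honew
        have h1 : S.u y ⊹ (S.one ⊹ S.neg (S.u y)) ≼ S.u y ⊹ S.e (S.u y) :=
          add_le_add_left S (S.u y) hdE
        rw [hwd, S.add_e (S.u y)] at h1
        exact S.le_trans _ _ _ honeW h1
    · -- d is zeroless and positive
      have hdE' : S.e (S.one ⊹ S.neg (S.u y)) ≼ S.one ⊹ S.neg (S.u y) := by
        rcases S.le_total (S.one ⊹ S.neg (S.u y)) (S.e (S.one ⊹ S.neg (S.u y))) with hq | hq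
        · exact absurd hq hdE
        · exact hq
      have hdz : (S.one ⊹ S.neg (S.u y)) ≠ S.e (S.one ⊹ S.neg (S.u y)) := by
        intro hq
        apply hdE
        rw [← hq]
        exact S.le_refl _
      obtain ⟨δ, hδd, hδe⟩ := S.decomp (S.one ⊹ S.neg (S.u y))
      have hδp : S.e δ ≼ δ := by
        rw [hδe]
        rcases S.le_total δ S.zero with hq | hq
        · exfalso
          apply hdE
          have h1 := S.add_le_add δ S.zero (S.e (S.one ⊹ S.neg (S.u y))) hq
          have hq2 : S.zero ⊹ S.e (S.one ⊹ S.neg (S.u y)) =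
              S.e (S.one ⊹ S.neg (S.u y)) := by
            rw [S.add_comm]; exact S.add_zero _
          rw [hq2, ← hδd] at h1
          exact h1
        · exact hq
      have hδz : δ ≠ S.e δ := by
        intro hq
        apply hdz
        calc S.one ⊹ S.neg (S.u y) = δ ⊹ S.e (S.one ⊹ S.neg (S.u y)) := hδd
        _ = S.zero ⊹ S.e (S.one ⊹ S.neg (S.u y)) := by rw [← hδe, ← hq]
        _ = S.e (S.one ⊹ S.neg (S.u y)) ⊹ S.zero := S.add_comm _ _
        _ = S.e (S.one ⊹ S.neg (S.u y)) := S.add_zero _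
      have hδled : δ ≼ S.one ⊹ S.neg (S.u y) := by
        have hq := le_add_mag S δ (e_e S (S.one ⊹ S.neg (S.u y))).symm
        rw [← hδd] at hq
        exact hq
      have hdOne2 : S.one ⊹ S.neg (S.u y) ≼ S.one ⊹ S.one :=
        S.le_trans _ _ _ hdW hW2
      have hδ2 : δ ≼ S.one ⊹ S.one := S.le_trans _ _ _ hδled hdOne2
      have hedle : S.e (S.one ⊹ S.neg (S.u y)) ≼ S.one ⊹ S.one :=
        S.le_trans _ _ _ hdE' hdOne2
      have hwδF : S.u y ⨳ δ ≼ S.e (S.u y) := by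
        have hd := S.dist (S.u y) δ (S.e (S.one ⊹ S.neg (S.u y)))
        rw [← hδd, hwdF] at hd
        have p1 : S.u y ⨳ δ ≼ S.u y ⨳ δ ⊹ S.u y ⨳ S.e (S.one ⊹ S.neg (S.u y)) :=
          le_add_mag S _ (mag_mul' S (e_e S _).symm (S.u y))
        rw [hd] at p1
        have q1 : S.e (S.u y) ⨳ δ ≼ S.e (S.u y) :=
          S.le_trans _ _ _ (S.amplification (S.u y) δ (S.one ⊹ S.one) hδp hδ2)
            (mul_two_le S hFmag)
        have q2 : S.e (S.u y) ⨳ S.e (S.one ⊹ S.neg (S.u y)) ≼ S.e (S.u y) := by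
          have qa := S.amplification (S.u y) (S.e (S.one ⊹ S.neg (S.u y)))
            (S.one ⊹ S.one) (by rw [e_e S]; exact S.le_refl _) hedle
          exact S.le_trans _ _ _ qa (mul_two_le S hFmag)
        have q3 : (S.e (S.u y) ⊹ S.e (S.u y) ⨳ δ) ⊹
            S.e (S.u y) ⨳ S.e (S.one ⊹ S.neg (S.u y)) ≼ S.e (S.u y) :=
          add_le_mag S hFmag (add_le_mag S hFmag (S.le_refl _) q1) q2
        exact S.le_trans _ _ _ p1 q3
      rcases S.le_total δ (S.u y) with hδw | hwδ
      · -- δ ≤ u y : bound x ⨳ d by e x and conclude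
        have hxδ : x ⨳ δ ≼ S.e x :=
          S.le_trans _ _ _ (S.compat_mul x δ (S.u y) hpx (Ne.symm hx) hδw) hPex
        have hxed : x ⨳ S.e (S.one ⊹ S.neg (S.u y)) ≼ S.e x := by
          have hed := S.e_add S.one (S.neg (S.u y))
          rw [S.e_neg (S.u y)] at hed
          rcases hed with hed | hed
          · rw [hed]; exact he1x
          · rw [hed]; exact hGe
        have hΘ : x ⨳ (S.one ⊹ S.neg (S.u y)) ≼ S.e x := by
          have hd := S.dist x δ (S.e (S.one ⊹ S.neg (S.u y)))
          rw [← hδd] at hd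
          have p1 : x ⨳ (S.one ⊹ S.neg (S.u y)) ≼
              x ⨳ δ ⊹ x ⨳ S.e (S.one ⊹ S.neg (S.u y)) := by
            have q := S.le_trans _ _ _
              (le_add_mag S (x ⨳ (S.one ⊹ S.neg (S.u y))) (mag_mul S hexmag δ))
              (le_add_mag S _ (mag_mul S hexmag (S.e (S.one ⊹ S.neg (S.u y)))))
            rw [← hd] at q
            exact q
          exact S.le_trans _ _ _ p1 (add_le_mag S hexmag hxδ hxed)
        have hxPT : x ≼ x ⨳ S.u y ⊹ x ⨳ (S.one ⊹ S.neg (S.u y)) := by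
          have hd := S.dist x (S.u y) (S.one ⊹ S.neg (S.u y))
          rw [hwd, hxW] at hd
          have q := S.le_trans _ _ _
            (le_add_mag S x (mag_mul S hexmag (S.u y)))
            (le_add_mag S _ (mag_mul S hexmag (S.one ⊹ S.neg (S.u y))))
          rw [← hd] at q
          exact q
        exact hx (S.le_antisymm _ _
          (S.le_trans _ _ _ hxPT (add_le_mag S hexmag hPex hΘ)) hpx)
      · -- u y ≤ δ : decompose u y and derive y ≤ e y
        obtain ⟨c, hcw, hce⟩ := S.decomp (S.u y)
        have hcp : S.e c ≼ c := by
          rw [hce]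
          rcases S.le_total c S.zero with hq | hq
          · exfalso
            have h1 := S.add_le_add c S.zero (S.e (S.u y)) hq
            have hq2 : S.zero ⊹ S.e (S.u y) = S.e (S.u y) := by
              rw [S.add_comm]; exact S.add_zero _
            rw [hq2, ← hcw] at h1
            exact hw (S.le_antisymm _ _ h1 hpw)
          · exact hq
        have hcz : c ≠ S.e c := by
          intro hq
          apply hw
          calc S.u y = c ⊹ S.e (S.u y) := hcw
          _ = S.zero ⊹ S.e (S.u y) := by rw [← hce, ← hq]
          _ = S.e (S.u y) ⊹ S.zero := S.add_comm _ _
          _ = S.e (S.u y) := S.add_zero _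
        have hclew : c ≼ S.u y := by
          have hq := le_add_mag S c hFmag
          rw [← hcw] at hq
          exact hq
        have hc2 : c ≼ S.one ⊹ S.one :=
          S.le_trans _ _ _ hclew (S.le_trans _ _ _ hw1 hone2)
        have hzF : S.zero ≼ S.e (S.u y) := zero_le_mag S hFmag
        have hcδF : c ⨳ δ ≼ S.e (S.u y) := by
          have hd := S.dist δ c (S.e (S.u y))
          rw [← hcw, hδe] at hd
          have p1 : δ ⨳ c ≼ δ ⨳ c ⊹ δ ⨳ S.e (S.u y) :=
            le_add_mag S _ (mag_mul' S hFmag δ)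
          rw [hd] at p1
          have q1 : δ ⨳ S.u y ≼ S.e (S.u y) := by
            rw [S.mul_comm]; exact hwδF
          have q2 : S.zero ⨳ c ≼ S.e (S.u y) := by
            have r1 : c ⨳ S.zero ≼ c ⨳ S.e (S.u y) :=
              S.compat_mul c S.zero (S.e (S.u y)) hcp (Ne.symm hcz) hzF
            have r3 : S.e (S.u y) ⨳ c ≼ S.e (S.u y) :=
              S.le_trans _ _ _
                (S.amplification (S.u y) c (S.one ⊹ S.one) hcp hc2)
                (mul_two_le S hFmag)
            have r2 : c ⨳ S.e (S.u y) ≼ S.e (S.u y) := by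
              rw [S.mul_comm]; exact r3
            rw [S.mul_comm]
            exact S.le_trans _ _ _ r1 r2
          have q3 : S.zero ⨳ S.e (S.u y) ≼ S.e (S.u y) := by
            have r2 := S.amplification (S.u y) S.zero (S.one ⊹ S.one)
              (by rw [← zero_mag S]; exact S.le_refl _)
              (S.le_trans _ _ _ hzone hone2)
            have r1 : S.e (S.u y) ⨳ S.zero ≼ S.e (S.u y) :=
              S.le_trans _ _ _ r2 (mul_two_le S hFmag)
            rw [S.mul_comm]; exact r1
          have hq : (δ ⨳ S.u y ⊹ S.zero ⨳ c) ⊹ S.zero ⨳ S.e (S.u y) ≼ S.e (S.u y) :=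
            add_le_mag S hFmag (add_le_mag S hFmag q1 q2) q3
          have hfin := S.le_trans _ _ _ p1 hq
          rw [S.mul_comm δ c] at hfin
          exact hfin
        have hccF : c ⨳ c ≼ S.e (S.u y) := by
          have r1 : c ⨳ c ≼ c ⨳ δ :=
            S.compat_mul c c δ hcp (Ne.symm hcz) (S.le_trans _ _ _ hclew hwδ)
          exact S.le_trans _ _ _ r1 hcδF
        have hicp : S.e (S.inv c) ≼ S.inv c := inv_pos S hcz hcp
        have hicz : S.inv c ≠ S.e (S.inv c) := inv_zeroless S hcz
        have hcFi : c ≼ S.e (S.u y) ⨳ S.inv c := by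
          have r1 := S.compat_mul (S.inv c) (c ⨳ c) (S.e (S.u y)) hicp
            (Ne.symm hicz) hccF
          have r2 : S.inv c ⨳ (c ⨳ c) = c := by
            calc S.inv c ⨳ (c ⨳ c) = (S.inv c ⨳ c) ⨳ c := S.mul_assoc _ _ _
            _ = (c ⨳ S.inv c) ⨳ c := by rw [S.mul_comm (S.inv c) c]
            _ = S.u c ⨳ c := by rw [S.mul_inv c hcz]
            _ = c ⨳ S.u c := S.mul_comm _ _
            _ = c := S.mul_u c hcz
          rw [r2, S.mul_comm (S.inv c) (S.e (S.u y))] at r1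
          exact r1
        have hycK : y ⨳ c ≼ S.e y ⨳ S.inv c := by
          have r1 := S.compat_mul y c (S.e (S.u y) ⨳ S.inv c) hpy (Ne.symm hy) hcFi
          have r2 : y ⨳ (S.e (S.u y) ⨳ S.inv c) = S.e y ⨳ S.inv c := by
            calc y ⨳ (S.e (S.u y) ⨳ S.inv c)
                = (y ⨳ S.e (S.u y)) ⨳ S.inv c := S.mul_assoc _ _ _
            _ = (S.e (S.u y) ⨳ y) ⨳ S.inv c := by rw [S.mul_comm y (S.e (S.u y))]
            _ = S.e y ⨳ S.inv c := by rw [I2 S hy]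
          rw [r2] at r1
          exact r1
        have hyF : y ⨳ S.e (S.u y) = S.e y := by
          rw [S.mul_comm]; exact I2 S hy
        have hyc : y ≼ y ⨳ c ⊹ S.e y := by
          have hd := S.dist y c (S.e (S.u y))
          rw [← hcw, S.mul_u y hy, hyF] at hd
          have q := S.le_trans _ _ _
            (le_add_mag S y (mag_mul S heymag c))
            (le_add_mag S _ (mag_mul S heymag (S.e (S.u y))))
          rw [← hd] at q
          exact q
        have hKmag : S.e y ⨳ S.inv c = S.e (S.e y ⨳ S.inv c) :=
          mag_mul S heymag (S.inv c)
        have hchain : y ≼ S.e y ⨳ S.inv c ⊹ S.e y :=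
          S.le_trans _ _ _ hyc (S.add_le_add _ _ _ hycK)
        rcases mag_add_cases S hKmag ((e_e S y).symm) with hcase | hcase
        · rw [hcase] at hchain
          have r1 : c ⨳ y ≼ c ⨳ (S.e y ⨳ S.inv c) :=
            S.compat_mul c y (S.e y ⨳ S.inv c) hcp (Ne.symm hcz) hchain
          have r2 : c ⨳ (S.e y ⨳ S.inv c) = S.e y ⨳ S.u c := by
            calc c ⨳ (S.e y ⨳ S.inv c) = S.e y ⨳ (c ⨳ S.inv c) := mul_left_comm S c _ _
            _ = S.e y ⨳ S.u c := by rw [S.mul_inv c hcz]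
          rw [r2] at r1
          have hucp : S.e (S.u c) ≼ S.u c := u_pos S hcz hcp
          have huc2 : S.u c ≼ S.one ⊹ S.one := by
            rcases S.le_total (S.one ⊹ S.one) (S.u c) with hq | hq
            · exact absurd hq (fun hq => two_le_u_false S hcz hcp hq)
            · exact hq
          have r3 : S.e y ⨳ S.u c ≼ S.e y :=
            S.le_trans _ _ _
              (S.amplification y (S.u c) (S.one ⊹ S.one) hucp huc2)
              (mul_two_le S heymag)
          have r4 : y ⨳ c ≼ S.e y := by
            rw [S.mul_comm]; exact S.le_trans _ _ _ r1 r3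
          have r5 : y ≼ S.e y := by
            have q := S.add_le_add (y ⨳ c) (S.e y) (S.e y) r4
            rw [mag_add_self S heymag] at q
            exact S.le_trans _ _ _ hyc q
          exact hy (S.le_antisymm _ _ r5 hpy)
        · rw [hcase] at hchain
          exact hy (S.le_antisymm _ _ hchain hpy)

/-- positive-positive case of the forward direction -/
lemma main_pos {x y : A} (hx : x ≠ S.e x) (hpx : S.e x ≼ x)
    (hy : y ≠ S.e y) (hpy : S.e y ≼ y)
    (hm : x ⨳ y = S.e (x ⨳ y)) : False := by
  have hpone : S.e S.one ≼ S.one := by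
    rcases S.le_total (S.e S.one) S.one with h | h
    · exact h
    · exfalso
      have hc := S.compat_mul x S.one (S.e S.one) hpx (Ne.symm hx) h
      rw [mul_one S x] at hc
      have h2 : x ⨳ S.e S.one ≼ S.e x := by
        rw [S.mul_comm]; exact e_one_mul_le S x
      exact hx (S.le_antisymm _ _ (S.le_trans _ _ _ hc h2) hpx)
  have hexmag : S.e x = S.e (S.e x) := (e_e S x).symm
  have heymag : S.e y = S.e (S.e y) := (e_e S y).symm
  have hsum : x ⨳ y = S.e x ⨳ y ⊹ S.e y ⨳ x := hm.trans (S.e_mul x y)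
  rcases mag_add_cases S (mag_mul S hexmag y) (mag_mul S heymag x) with hc | hc
  · exact core S hpone hx hpx hy hpy (hsum.trans hc)
  · have h' : y ⨳ x = S.e y ⨳ x := by
      rw [S.mul_comm y x]
      exact hsum.trans hc
    exact core S hpone hy hpy hx hpx h'

/-- forward direction for arbitrary zeroless x, y -/
lemma main_forward {x y : A} (hx : x ≠ S.e x) (hy : y ≠ S.e y)
    (hm : x ⨳ y = S.e (x ⨳ y)) : False := by
  have hmmag : S.neg (x ⨳ y) = x ⨳ y := neg_mag S hm
  rcases S.le_total (S.e x) x with hpx | hnx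
  · rcases S.le_total (S.e y) y with hpy | hny
    · exact main_pos S hx hpx hy hpy hm
    · -- y negative
      have hy' : S.neg y ≠ S.e (S.neg y) := neg_zeroless S hy
      have hpy' : S.e (S.neg y) ≼ S.neg y := by
        rw [S.e_neg]; exact pos_neg_of_neg S hny
      have h1 : x ⨳ S.neg y = x ⨳ y := by
        rw [mul_neg S x y, hmmag]
      have hm' : x ⨳ S.neg y = S.e (x ⨳ S.neg y) := by
        rw [h1]; exact hm
      exact main_pos S hx hpx hy' hpy' hm'
  · rcases S.le_total (S.e y) y with hpy | hny
    · have hx' : S.neg x ≠ S.e (S.neg x) := neg_zeroless S hx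
      have hpx' : S.e (S.neg x) ≼ S.neg x := by
        rw [S.e_neg]; exact pos_neg_of_neg S hnx
      have h1 : S.neg x ⨳ y = x ⨳ y := by
        rw [← S.neg_mul x y, hmmag]
      have hm' : S.neg x ⨳ y = S.e (S.neg x ⨳ y) := by
        rw [h1]; exact hm
      exact main_pos S hx' hpx' hy hpy hm'
    · have hx' : S.neg x ≠ S.e (S.neg x) := neg_zeroless S hx
      have hpx' : S.e (S.neg x) ≼ S.neg x := by
        rw [S.e_neg]; exact pos_neg_of_neg S hnx
      have hy' : S.neg y ≠ S.e (S.neg y) := neg_zeroless S hy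
      have hpy' : S.e (S.neg y) ≼ S.neg y := by
        rw [S.e_neg]; exact pos_neg_of_neg S hny
      have h1 : S.neg x ⨳ S.neg y = x ⨳ y := by
        rw [mul_neg S (S.neg x) y, ← S.neg_mul x y, hmmag, hmmag]
      have hm' : S.neg x ⨳ S.neg y = S.e (S.neg x ⨳ S.neg y) := by
        rw [h1]; exact hm
      exact main_pos S hx' hpx' hy' hpy' hm'

end SolidLemmas

theorem stmt8 {A : Type*} (S : Solid A) (x y : A) :
    S.mul x y = S.e (S.mul x y) ↔ x = S.e x ∨ y = S.e y := by
  constructor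
  · intro hm
    by_cases hx : x = S.e x
    · exact Or.inl hx
    · by_cases hy : y = S.e y
      · exact Or.inr hy
      · exact absurd hm (fun hm => (SolidLemmas.main_forward S hx hy hm).elim)
  · intro h
    rcases h with h | h
    · exact SolidLemmas.mag_mul S h y
    · exact SolidLemmas.mag_mul' S h x
end

section
/- In a solid, e(x)·e(y) ≤ e(x·y) for all x, y. -/
theorem stmt11 {A : Type*} (S : Solid A) (x y : A) :
    S.le (S.mul (S.e x) (S.e y)) (S.e (S.mul x y)) := by
  -- e is idempotent
  have ee : ∀ a, S.e (S.e a) = S.e a := by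
    intro a
    rcases S.e_add a (S.neg a) with h | h
    · rw [S.add_neg] at h; exact h
    · rw [S.add_neg, S.e_neg] at h; exact h
  set A := S.mul (S.e x) (S.e y) with hA
  set B := S.mul (S.e x) y with hB
  -- B is idempotent-e: e B = B
  obtain ⟨z, hz⟩ := S.escala x y
  have hBe : S.e B = B := by rw [hB, hz, ee]
  -- e B = B + A
  have hBA : B = S.add A B := by
    have := S.e_mul (S.e x) y
    rw [hBe, ee] at this
    rw [S.mul_comm (S.e y) (S.e x)] at this
    rw [S.add_comm] at this
    exact this
  -- absorb A into e (x·y)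
  have habs : S.add A (S.e (S.mul x y)) = S.e (S.mul x y) := by
    rw [S.e_mul x y, S.add_assoc]
    congr 1
    rw [S.add_comm, ← hB, S.add_comm]
    exact hBA.symm
  exact (S.le_e (S.mul x y) A habs).1
end

section
/- In a solid, the product of two positive elements is positive: if e(x) ≤ x and e(y) ≤ y then e(x·y) ≤ x·y. -/
theorem stmt12 {A : Type*} (S : Solid A) (x y : A)
    (hx : S.le (S.e x) x) (hy : S.le (S.e y) y) :
    S.le (S.e (S.mul x y)) (S.mul x y) := by
  by_cases hxe : x = S.e x
  · obtain ⟨z, hz⟩ := S.escala x y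
    have hm : S.mul x y = S.e z := by rw [hxe]; exact hz
    rw [hm]
    have h1 : S.add (S.e (S.e z)) (S.e z) = S.e z := by
      rw [S.add_comm]; exact S.add_e (S.e z)
    exact (S.le_e z (S.e (S.e z)) h1).1
  by_cases hye : y = S.e y
  · obtain ⟨z, hz⟩ := S.escala y x
    have hm : S.mul x y = S.e z := by
      rw [hye, S.mul_comm]; exact hz
    rw [hm]
    have h1 : S.add (S.e (S.e z)) (S.e z) = S.e z := by
      rw [S.add_comm]; exact S.add_e (S.e z)
    exact (S.le_e z (S.e (S.e z)) h1).1
  · have L1 : S.le (S.mul (S.e x) y) (S.mul x y) := by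
      have := S.compat_mul y (S.e x) x hy (Ne.symm hye) hx
      rwa [S.mul_comm y (S.e x), S.mul_comm y x] at this
    set a := S.mul (S.e x) y with ha
    set b := S.mul (S.e y) x with hb
    obtain ⟨w, hw⟩ := S.escala y x
    have hbb : S.add b b = b := by
      rw [hb, hw]; exact S.e_max w (S.e w) (S.add_e w)
    have h0 : S.add (S.add (S.mul x y) a) b = S.mul x y := by
      rw [← S.add_assoc, ← S.e_mul, S.add_e]
    have habs : S.add (S.mul x y) b = S.mul x y := by
      calc S.add (S.mul x y) b = S.add (S.add (S.add (S.mul x y) a) b) b := by rw [h0]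
        _ = S.add (S.add (S.mul x y) a) (S.add b b) := (S.add_assoc _ _ _).symm
        _ = S.add (S.add (S.mul x y) a) b := by rw [hbb]
        _ = S.mul x y := h0
    have key : S.le (S.add a b) (S.add (S.mul x y) b) := S.add_le_add a (S.mul x y) b L1
    rw [habs] at key
    rw [S.e_mul]
    exact key
end

section
/- In a solid, a zeroless element x is positive if and only if its inverse x⁻¹ is positive: e(x) < x iff e(x⁻¹) < x⁻¹. -/
section Lemmas
variable {A : Type*} (S : Solid A) (x : A)

lemma solid_e_e : S.e (S.e x) = S.e x := by
  have h := S.e_add x (S.neg x)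
  rw [S.add_neg, S.e_neg] at h
  rcases h with h | h <;> exact h

lemma solid_add_self_neutral (a : A) (ha : a = S.e a) : S.add a a = a := by
  have h := S.e_max a (S.e a) (S.add_e a)
  rw [← ha] at h; exact h

lemma solid_neg_neg : S.neg (S.neg x) = x := by
  have h1 : S.add (S.neg x) (S.neg (S.neg x)) = S.e x := by
    rw [S.add_neg, S.e_neg]
  calc S.neg (S.neg x)
      = S.add (S.neg (S.neg x)) (S.e (S.neg (S.neg x))) := (S.add_e _).symm
    _ = S.add (S.neg (S.neg x)) (S.e x) := by rw [S.e_neg, S.e_neg]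
    _ = S.add (S.neg (S.neg x)) (S.add x (S.neg x)) := by rw [S.add_neg]
    _ = S.add (S.add (S.neg (S.neg x)) x) (S.neg x) := S.add_assoc _ _ _
    _ = S.add (S.neg x) (S.add (S.neg (S.neg x)) x) := S.add_comm _ _
    _ = S.add (S.add (S.neg x) (S.neg (S.neg x))) x := S.add_assoc _ _ _
    _ = S.add (S.e x) x := by rw [h1]
    _ = S.add x (S.e x) := S.add_comm _ _
    _ = x := S.add_e x

lemma solid_add_neutral (a b : A) (ha : a = S.e a) (hb : b = S.e b) :
    S.add a b = a ∨ S.add a b = b := by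
  have hab : S.add a (S.add a b) = S.add a b := by
    rw [S.add_assoc, solid_add_self_neutral S a ha]
  have hba : S.add b (S.add a b) = S.add a b := by
    rw [S.add_comm a b, S.add_assoc, solid_add_self_neutral S b hb]
  have hma := S.e_max (S.add a b) a (by rw [S.add_comm]; exact hab)
  have hmb := S.e_max (S.add a b) b (by rw [S.add_comm]; exact hba)
  rcases S.e_add a b with h | h
  · rw [← ha] at h
    left; rw [h] at hmb; exact hmb
  · rw [← hb] at h
    right; rw [h] at hma; rw [S.add_comm] at hma; exact hma

lemma solid_u_ne (hx : x ≠ S.e x) : S.u x ≠ S.e (S.u x) := by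
  intro h
  obtain ⟨z, hz⟩ := S.escala (S.u x) x
  have hx2 : x = S.e z := by
    calc x = S.mul x (S.u x) := (S.mul_u x hx).symm
      _ = S.mul x (S.e (S.u x)) := by rw [← h]
      _ = S.mul (S.e (S.u x)) x := S.mul_comm _ _
      _ = S.e z := hz
  apply hx
  rw [hx2, solid_e_e]

lemma solid_inv_ne (hx : x ≠ S.e x) : S.inv x ≠ S.e (S.inv x) := by
  intro h
  obtain ⟨z, hz⟩ := S.escala (S.inv x) x
  have h2 : S.u x = S.e z := by
    calc S.u x = S.mul x (S.inv x) := (S.mul_inv x hx).symm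
      _ = S.mul x (S.e (S.inv x)) := by rw [← h]
      _ = S.mul (S.e (S.inv x)) x := S.mul_comm _ _
      _ = S.e z := hz
  apply solid_u_ne S x hx
  rw [h2, solid_e_e]

lemma solid_neutral_mul (y : A) : S.mul (S.e x) y = S.e (S.mul (S.e x) y) := by
  obtain ⟨z, hz⟩ := S.escala x y
  rw [hz, solid_e_e]

lemma solid_sq_ne (hx : x ≠ S.e x) : S.mul x x ≠ S.e (S.mul x x) := by
  intro h
  obtain ⟨z, hz⟩ := S.escala (S.mul x x) (S.inv x)
  have hx2 : x = S.e z := by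
    calc x = S.mul x (S.u x) := (S.mul_u x hx).symm
      _ = S.mul x (S.mul x (S.inv x)) := by rw [S.mul_inv x hx]
      _ = S.mul (S.mul x x) (S.inv x) := S.mul_assoc _ _ _
      _ = S.mul (S.e (S.mul x x)) (S.inv x) := by rw [← h]
      _ = S.e z := hz
  apply hx
  rw [hx2, solid_e_e]

lemma solid_e_sq : S.e (S.mul x x) = S.mul x (S.e x) := by
  have h := S.e_mul x x
  rw [solid_add_self_neutral S _ (solid_neutral_mul S x x)] at h
  rw [h, S.mul_comm]

lemma solid_sq_pos_of_pos (hx : x ≠ S.e x) (hle : S.le (S.e x) x) :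
    S.le (S.e (S.mul x x)) (S.mul x x) := by
  rw [solid_e_sq]
  exact S.compat_mul x (S.e x) x hle (Ne.symm hx) hle

lemma solid_sq_pos (hx : x ≠ S.e x) : S.le (S.e (S.mul x x)) (S.mul x x) := by
  rcases S.le_total (S.e x) x with hle | hle
  · exact solid_sq_pos_of_pos S x hx hle
  · -- x negative; use neg x
    have hne : S.e (S.neg x) = S.e x := S.e_neg x
    have hn_ne : S.neg x ≠ S.e (S.neg x) := by
      rw [hne]; intro h
      apply hx
      calc x = S.add x (S.e x) := (S.add_e x).symm
        _ = S.add x (S.neg x) := by rw [← h]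
        _ = S.e x := S.add_neg x
    have hn_pos : S.le (S.e (S.neg x)) (S.neg x) := by
      have h1 := S.add_le_add x (S.e x) (S.neg x) hle
      rw [S.add_neg] at h1
      have h2 : S.add (S.e x) (S.neg x) = S.neg x := by
        rw [S.add_comm, ← hne, S.add_e]
      rw [h2] at h1; rw [hne]; exact h1
    have hsq : S.mul (S.neg x) (S.neg x) = S.mul x x := by
      calc S.mul (S.neg x) (S.neg x) = S.neg (S.mul x (S.neg x)) := (S.neg_mul x (S.neg x)).symm
        _ = S.neg (S.mul (S.neg x) x) := by rw [S.mul_comm]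
        _ = S.neg (S.neg (S.mul x x)) := by rw [← S.neg_mul]
        _ = S.mul x x := solid_neg_neg S _
    have := solid_sq_pos_of_pos S (S.neg x) hn_ne hn_pos
    rw [hsq] at this; exact this

lemma solid_pos_mul_pos (s : A) (hx : x ≠ S.e x) (hxp : S.le (S.e x) x)
    (hs : s ≠ S.e s) (hsp : S.le (S.e s) s) :
    S.le (S.e (S.mul x s)) (S.mul x s) := by
  have ht1 : S.le (S.mul (S.e x) s) (S.mul x s) := by
    have h := S.compat_mul s (S.e x) x hsp (Ne.symm hs) hxp
    rw [S.mul_comm s (S.e x), S.mul_comm s x] at h; exact h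
  have ht2 : S.le (S.mul (S.e s) x) (S.mul x s) := by
    have h := S.compat_mul x (S.e s) s hxp (Ne.symm hx) hsp
    rw [S.mul_comm x (S.e s)] at h; exact h
  have hem := S.e_mul x s
  rcases solid_add_neutral S (S.mul (S.e x) s) (S.mul (S.e s) x)
      (solid_neutral_mul S x s) (solid_neutral_mul S s x) with h | h
  · rw [hem, h]; exact ht1
  · rw [hem, h]; exact ht2

lemma solid_inv_inv (hx : x ≠ S.e x) : S.inv (S.inv x) = x := by
  have hi : S.inv x ≠ S.e (S.inv x) := solid_inv_ne S x hx
  have hii : S.inv (S.inv x) ≠ S.e (S.inv (S.inv x)) := solid_inv_ne S (S.inv x) hi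
  symm
  calc x = S.mul x (S.u x) := (S.mul_u x hx).symm
    _ = S.mul x (S.u (S.inv x)) := by rw [S.u_inv x hx]
    _ = S.mul x (S.mul (S.inv x) (S.inv (S.inv x))) := by rw [S.mul_inv (S.inv x) hi]
    _ = S.mul (S.mul x (S.inv x)) (S.inv (S.inv x)) := S.mul_assoc _ _ _
    _ = S.mul (S.u x) (S.inv (S.inv x)) := by rw [S.mul_inv x hx]
    _ = S.mul (S.u (S.inv (S.inv x))) (S.inv (S.inv x)) := by
          rw [S.u_inv (S.inv x) hi, S.u_inv x hx]
    _ = S.mul (S.inv (S.inv x)) (S.u (S.inv (S.inv x))) := S.mul_comm _ _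
    _ = S.inv (S.inv x) := S.mul_u _ hii

lemma solid_inv_pos_of_pos (hx : x ≠ S.e x) (hxp : S.le (S.e x) x) :
    S.le (S.e (S.inv x)) (S.inv x) := by
  have hi : S.inv x ≠ S.e (S.inv x) := solid_inv_ne S x hx
  have heq : S.inv x = S.mul x (S.mul (S.inv x) (S.inv x)) := by
    calc S.inv x = S.mul (S.inv x) (S.u (S.inv x)) := (S.mul_u _ hi).symm
      _ = S.mul (S.inv x) (S.u x) := by rw [S.u_inv x hx]
      _ = S.mul (S.inv x) (S.mul x (S.inv x)) := by rw [S.mul_inv x hx]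
      _ = S.mul (S.mul (S.inv x) x) (S.inv x) := S.mul_assoc _ _ _
      _ = S.mul (S.mul x (S.inv x)) (S.inv x) := by rw [S.mul_comm (S.inv x) x]
      _ = S.mul x (S.mul (S.inv x) (S.inv x)) := (S.mul_assoc _ _ _).symm
  have hs : S.mul (S.inv x) (S.inv x) ≠ S.e (S.mul (S.inv x) (S.inv x)) :=
    solid_sq_ne S (S.inv x) hi
  have hsp := solid_sq_pos S (S.inv x) hi
  rw [heq]
  exact solid_pos_mul_pos S x _ hx hxp hs hsp

end Lemmas

theorem stmt13 {A : Type*} (S : Solid A) (x : A) (hx : x ≠ S.e x) :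
    (S.le (S.e x) x ∧ S.e x ≠ x) ↔
    (S.le (S.e (S.inv x)) (S.inv x) ∧ S.e (S.inv x) ≠ S.inv x) := by
  constructor
  · rintro ⟨h1, _⟩
    exact ⟨solid_inv_pos_of_pos S x hx h1, Ne.symm (solid_inv_ne S x hx)⟩
  · rintro ⟨h1, h2⟩
    have hi : S.inv x ≠ S.e (S.inv x) := Ne.symm h2
    have := solid_inv_pos_of_pos S (S.inv x) hi h1
    rw [solid_inv_inv S x hx] at this
    exact ⟨this, Ne.symm hx⟩
end

section
/- In a solid, the set of precise elements (those x with e(x) = 0, where 0 is the minimal magnitude) is closed under addition, negation, multiplication, and (for nonzero elements) inversion, and forms an ordered field. -/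
section Aux

variable {A : Type*} (S : Solid A)

theorem sld_zero_add (x : A) : S.add S.zero x = x := by
  rw [S.add_comm]; exact S.add_zero x

theorem sld_mag_idem (x : A) : S.add (S.e x) (S.e x) = S.e x :=
  S.e_max x (S.e x) (S.add_e x)

theorem sld_e_e (x : A) : S.e (S.e x) = S.e x := by
  have h1 : S.add (S.e x) (S.e (S.e x)) = S.e x := S.add_e (S.e x)
  have h2 : S.add (S.e (S.e x)) (S.e x) = S.e (S.e x) :=
    S.e_max (S.e x) (S.e x) (sld_mag_idem S x)
  rw [S.add_comm] at h1
  exact h2.symm.trans h1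

theorem sld_e_zero : S.e S.zero = S.zero := by
  have h1 : S.add S.zero (S.e S.zero) = S.zero := S.add_e S.zero
  rw [S.add_comm, S.add_zero] at h1
  exact h1

theorem sld_zero_le_mag (x : A) : S.le S.zero (S.e x) :=
  (S.le_e x S.zero (sld_zero_add S (S.e x))).1

theorem sld_e_add_eq (x y : A) : S.e (S.add x y) = S.add (S.e x) (S.e y) := by
  have habs : S.add (S.add x y) (S.add (S.e x) (S.e y)) = S.add x y := by
    have h1 : S.add (S.add x y) (S.e x) = S.add x y := by
      rw [← S.add_assoc, S.add_comm y (S.e x), S.add_assoc, S.add_e]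
    rw [S.add_assoc, h1, ← S.add_assoc, S.add_e]
  have hA : S.add (S.e (S.add x y)) (S.add (S.e x) (S.e y)) = S.e (S.add x y) :=
    S.e_max _ _ habs
  have hB : S.add (S.add (S.e x) (S.e y)) (S.e (S.add x y)) = S.add (S.e x) (S.e y) := by
    rcases S.e_add x y with h | h
    · rw [h, S.add_comm (S.add (S.e x) (S.e y)) (S.e x), S.add_assoc, sld_mag_idem]
    · rw [h, ← S.add_assoc, sld_mag_idem]
  calc S.e (S.add x y) = S.add (S.e (S.add x y)) (S.add (S.e x) (S.e y)) := hA.symm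
    _ = S.add (S.add (S.e x) (S.e y)) (S.e (S.add x y)) := S.add_comm _ _
    _ = S.add (S.e x) (S.e y) := hB

theorem sld_neg_zero : S.neg S.zero = S.zero := by
  have h := S.add_neg S.zero
  rw [sld_e_zero, sld_zero_add] at h
  exact h

theorem sld_neg_neg (x : A) : S.neg (S.neg x) = x := by
  have h1 : S.add (S.neg x) (S.neg (S.neg x)) = S.e x := by
    rw [S.add_neg, S.e_neg]
  have h2 : S.add x (S.add (S.neg x) (S.neg (S.neg x))) = S.add x (S.e x) := by rw [h1]
  rw [S.add_e, S.add_assoc, S.add_neg] at h2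
  have h3 : S.add (S.neg (S.neg x)) (S.e x) = S.neg (S.neg x) := by
    have h4 := S.add_e (S.neg (S.neg x))
    rwa [S.e_neg, S.e_neg] at h4
  rw [S.add_comm] at h2
  exact h3.symm.trans h2

theorem sld_mul_one (x : A) : S.mul x S.one = x := by
  rw [S.mul_comm]; exact S.one_mul x

theorem sld_mul_neg (x y : A) : S.mul x (S.neg y) = S.neg (S.mul x y) := by
  rw [S.mul_comm x (S.neg y), ← S.neg_mul, S.mul_comm y x]

theorem sld_zero_mul_mag (y : A) : ∃ z, S.mul S.zero y = S.e z := by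
  obtain ⟨z, hz⟩ := S.escala S.zero y
  rw [sld_e_zero] at hz
  exact ⟨z, hz⟩

theorem sld_zero_le_zero_mul (y : A) : S.le S.zero (S.mul S.zero y) := by
  obtain ⟨z, hz⟩ := sld_zero_mul_mag S y
  rw [hz]; exact sld_zero_le_mag S z

theorem sld_e_zero_mul (y : A) : S.e (S.mul S.zero y) = S.mul S.zero y := by
  obtain ⟨z, hz⟩ := sld_zero_mul_mag S y
  rw [hz, sld_e_e]

theorem sld_zero_le_neg (a : A) (ha : S.e a = S.zero) (h : S.le a S.zero) :
    S.le S.zero (S.neg a) := by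
  have h2 := S.add_le_add a S.zero (S.neg a) h
  rwa [S.add_neg, ha, sld_zero_add] at h2

theorem sld_dense_precise (w : A) (hw : S.e w ≠ S.zero) :
    ∃ b, S.e b = S.zero ∧ S.le S.zero b ∧ b ≠ S.zero ∧ S.le b (S.e w) := by
  obtain ⟨z, hz1, hz2, hz3, hz4, hz5⟩ :=
    S.dense S.zero (S.e w) (sld_e_zero S).symm (sld_e_e S w).symm
      (sld_zero_le_mag S w) (fun h => hw h.symm)
  obtain ⟨b, hbz, hbe⟩ := S.decomp z
  have hbne : b ≠ S.zero := by
    intro h; rw [h, sld_zero_add S] at hbz; exact hz1 hbz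
  have hez_le_z : S.le (S.e z) z := by
    have h2 := S.add_le_add S.zero z (S.e z) hz2
    rwa [sld_zero_add S, S.add_e] at h2
  have hb_pos : S.le S.zero b := by
    rcases S.le_total S.zero b with h | h
    · exact h
    · exfalso
      have h2 := S.add_le_add b S.zero (S.e z) h
      rw [sld_zero_add S, ← hbz] at h2
      exact hz1 (S.le_antisymm z (S.e z) h2 hez_le_z)
  have hb_le_z : S.le b z := by
    have h2 := S.add_le_add S.zero (S.e z) b (sld_zero_le_mag S z)
    rw [sld_zero_add S, S.add_comm (S.e z) b, ← hbz] at h2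
    exact h2
  exact ⟨b, hbe, hb_pos, hbne, S.le_trans b z (S.e w) hb_le_z hz4⟩

theorem sld_exists_precise : ∃ b, S.e b = S.zero ∧ S.le S.zero b ∧ b ≠ S.zero := by
  obtain ⟨x₀, h1, _⟩ := S.exists_neutrix
  obtain ⟨b, hb, hp, hn, _⟩ := sld_dense_precise S x₀ h1
  exact ⟨b, hb, hp, hn⟩

theorem sld_square_zero (a : A) (ha : S.e a = S.zero) (hsq : S.mul a a = S.zero) :
    a = S.zero := by
  by_cases h0 : a = S.zero
  · exact h0
  · exfalso
    have hne : a ≠ S.e a := fun h => h0 (h.trans ha)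
    have h1 : a = S.mul S.zero (S.inv a) := by
      calc a = S.mul a (S.u a) := (S.mul_u a hne).symm
        _ = S.mul a (S.mul a (S.inv a)) := by rw [S.mul_inv a hne]
        _ = S.mul (S.mul a a) (S.inv a) := S.mul_assoc a a (S.inv a)
        _ = S.mul S.zero (S.inv a) := by rw [hsq]
    obtain ⟨z, hz⟩ := sld_zero_mul_mag S (S.inv a)
    rw [hz] at h1
    apply h0
    calc a = S.e z := h1
      _ = S.e (S.e z) := (sld_e_e S z).symm
      _ = S.e a := by rw [← h1]
      _ = S.zero := ha

theorem sld_mag_sum_zero (m n : A) (h : S.add m n = S.zero)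
    (hm : S.le S.zero m) (hn : S.le S.zero n) : m = S.zero ∧ n = S.zero := by
  have h1 : S.le m S.zero := by
    have h3 := S.add_le_add S.zero n m hn
    rw [sld_zero_add S, S.add_comm n m, h] at h3
    exact h3
  have h2 : S.le n S.zero := by
    have h3 := S.add_le_add S.zero m n hm
    rw [sld_zero_add S, h] at h3
    exact h3
  exact ⟨S.le_antisymm m S.zero h1 hm, S.le_antisymm n S.zero h2 hn⟩

theorem sld_nzd_pos (a b : A) (ha : S.e a = S.zero) (hb : S.e b = S.zero)
    (ha0 : S.le S.zero a) (hb0 : S.le S.zero b) (hab : S.mul a b = S.zero) :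
    a = S.zero ∨ b = S.zero := by
  rcases S.le_total a b with h | h
  · by_cases h0 : a = S.zero
    · exact Or.inl h0
    · left
      have hea : S.le (S.e a) a := by rw [ha]; exact ha0
      have hnea : S.e a ≠ a := by rw [ha]; exact fun hh => h0 hh.symm
      have h1 : S.le (S.mul a a) (S.mul a b) := S.compat_mul a a b hea hnea h
      rw [hab] at h1
      have h2 : S.le S.zero (S.mul a a) := by
        have h3 := S.compat_mul a S.zero a hea hnea ha0
        have h4 : S.le S.zero (S.mul a S.zero) := by
          rw [S.mul_comm]; exact sld_zero_le_zero_mul S a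
        exact S.le_trans _ _ _ h4 h3
      exact sld_square_zero S a ha (S.le_antisymm _ _ h1 h2)
  · by_cases h0 : b = S.zero
    · exact Or.inr h0
    · right
      have heb : S.le (S.e b) b := by rw [hb]; exact hb0
      have hneb : S.e b ≠ b := by rw [hb]; exact fun hh => h0 hh.symm
      have h1 : S.le (S.mul b b) (S.mul b a) := S.compat_mul b b a heb hneb h
      rw [S.mul_comm b a, hab] at h1
      have h2 : S.le S.zero (S.mul b b) := by
        have h3 := S.compat_mul b S.zero b heb hneb hb0
        have h4 : S.le S.zero (S.mul b S.zero) := by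
          rw [S.mul_comm]; exact sld_zero_le_zero_mul S b
        exact S.le_trans _ _ _ h4 h3
      exact sld_square_zero S b hb (S.le_antisymm _ _ h1 h2)

theorem sld_nzd (a b : A) (ha : S.e a = S.zero) (hb : S.e b = S.zero)
    (hab : S.mul a b = S.zero) : a = S.zero ∨ b = S.zero := by
  rcases S.le_total S.zero a with hA | hA <;> rcases S.le_total S.zero b with hB | hB
  · exact sld_nzd_pos S a b ha hb hA hB hab
  · have hb' : S.e (S.neg b) = S.zero := (S.e_neg b).trans hb
    have hB' : S.le S.zero (S.neg b) := sld_zero_le_neg S b hb hB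
    have hab' : S.mul a (S.neg b) = S.zero := by
      rw [sld_mul_neg S a b, hab, sld_neg_zero S]
    rcases sld_nzd_pos S a (S.neg b) ha hb' hA hB' hab' with h | h
    · exact Or.inl h
    · right; rw [← sld_neg_neg S b, h, sld_neg_zero S]
  · have ha' : S.e (S.neg a) = S.zero := (S.e_neg a).trans ha
    have hA' : S.le S.zero (S.neg a) := sld_zero_le_neg S a ha hA
    have hab' : S.mul (S.neg a) b = S.zero := by
      rw [← S.neg_mul, hab, sld_neg_zero S]
    rcases sld_nzd_pos S (S.neg a) b ha' hb hA' hB hab' with h | h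
    · left; rw [← sld_neg_neg S a, h, sld_neg_zero S]
    · exact Or.inr h
  · have ha' : S.e (S.neg a) = S.zero := (S.e_neg a).trans ha
    have hb' : S.e (S.neg b) = S.zero := (S.e_neg b).trans hb
    have hA' : S.le S.zero (S.neg a) := sld_zero_le_neg S a ha hA
    have hB' : S.le S.zero (S.neg b) := sld_zero_le_neg S b hb hB
    have hab' : S.mul (S.neg a) (S.neg b) = S.zero := by
      rw [← S.neg_mul, sld_mul_neg S a b, hab, sld_neg_zero S, sld_neg_zero S]
    rcases sld_nzd_pos S (S.neg a) (S.neg b) ha' hb' hA' hB' hab' with h | h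
    · left; rw [← sld_neg_neg S a, h, sld_neg_zero S]
    · right; rw [← sld_neg_neg S b, h, sld_neg_zero S]

theorem sld_mag_kill_pos (w a : A) (ha : S.e a = S.zero) (hne : a ≠ S.zero)
    (ha0 : S.le S.zero a) (h : S.mul (S.e w) a = S.zero) : S.e w = S.zero := by
  by_contra hw
  obtain ⟨b, hb, hb0, hbne, hble⟩ := sld_dense_precise S w hw
  have hea : S.le (S.e a) a := by rw [ha]; exact ha0
  have hnea : S.e a ≠ a := by rw [ha]; exact fun hh => hne hh.symm
  have h1 : S.le (S.mul a b) (S.mul a (S.e w)) := S.compat_mul a b (S.e w) hea hnea hble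
  rw [S.mul_comm a (S.e w), h] at h1
  have h2 : S.le S.zero (S.mul a b) := by
    have h3 := S.compat_mul a S.zero b hea hnea hb0
    have h4 : S.le S.zero (S.mul a S.zero) := by
      rw [S.mul_comm]; exact sld_zero_le_zero_mul S a
    exact S.le_trans _ _ _ h4 h3
  have h5 : S.mul a b = S.zero := S.le_antisymm _ _ h1 h2
  rcases sld_nzd_pos S a b ha hb ha0 hb0 h5 with h6 | h6
  · exact hne h6
  · exact hbne h6

theorem sld_mag_kill (w a : A) (ha : S.e a = S.zero) (hne : a ≠ S.zero)
    (h : S.mul (S.e w) a = S.zero) : S.e w = S.zero := by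
  rcases S.le_total S.zero a with h0 | h0
  · exact sld_mag_kill_pos S w a ha hne h0 h
  · have ha' : S.e (S.neg a) = S.zero := (S.e_neg a).trans ha
    have hne' : S.neg a ≠ S.zero := by
      intro hh; apply hne
      rw [← sld_neg_neg S a, hh, sld_neg_zero S]
    have h0' : S.le S.zero (S.neg a) := sld_zero_le_neg S a ha h0
    have h' : S.mul (S.e w) (S.neg a) = S.zero := by
      rw [sld_mul_neg S (S.e w) a, h, sld_neg_zero S]
    exact sld_mag_kill_pos S w (S.neg a) ha' hne' h0' h'

theorem sld_e_one : S.e S.one = S.zero := by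
  obtain ⟨b, hb, _, hbne⟩ := sld_exists_precise S
  have h1 := S.e_mul S.one b
  rw [S.one_mul, hb, sld_mul_one S, S.add_zero] at h1
  exact sld_mag_kill S S.one b hb hbne h1.symm

theorem sld_zero_mul_precise (c : A) (hc : S.e c = S.zero) :
    S.mul S.zero c = S.zero := by
  have h1 := S.e_mul S.one c
  rw [S.one_mul, hc, sld_e_one S, sld_mul_one S, S.add_zero] at h1
  exact h1.symm

theorem sld_one_ne_zero : S.one ≠ S.zero := by
  obtain ⟨b, hb, _, hbne⟩ := sld_exists_precise S
  intro h
  apply hbne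
  have h1 : b = S.mul S.one b := (S.one_mul b).symm
  rw [h, sld_zero_mul_precise S b hb] at h1
  exact h1

theorem sld_u_precise (a : A) (ha : S.e a = S.zero) (hne : a ≠ S.zero) :
    S.u a = S.one := by
  have hnea : a ≠ S.e a := fun hh => hne (hh.trans ha)
  have hno : S.e (S.neg S.one) = S.zero := (S.e_neg S.one).trans (sld_e_one S)
  have hmn : S.mul a (S.neg S.one) = S.neg a := by
    rw [sld_mul_neg S a S.one, sld_mul_one S]
  have hd := S.dist a (S.u a) (S.neg S.one)
  rw [S.mul_u a hnea, hmn, S.add_neg a, ha,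
    sld_zero_mul_precise S (S.neg S.one) hno, S.add_zero] at hd
  -- hd : zero = add (mul a (add (u a) (neg one))) (mul zero (u a))
  have hmag := congrArg S.e hd
  rw [sld_e_zero S, sld_e_add_eq S, sld_e_zero_mul S (S.u a)] at hmag
  obtain ⟨hP0, hZ0⟩ := sld_mag_sum_zero S _ _ hmag.symm (sld_zero_le_mag S _)
    (sld_zero_le_zero_mul S (S.u a))
  rw [hZ0, S.add_zero] at hd
  -- hd : zero = mul a (add (u a) (neg one))
  have hQ : S.e (S.u a) = S.mul S.zero (S.inv a) := by
    have h5 := S.e_u a hnea; rwa [ha] at h5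
  have hQa : S.mul (S.e (S.u a)) a = S.zero := by
    rw [hQ, ← S.mul_assoc, S.mul_comm (S.inv a) a, S.mul_inv a hnea, hZ0]
  have hQ0 : S.e (S.u a) = S.zero := sld_mag_kill S (S.u a) a ha hne hQa
  have hd_e : S.e (S.add (S.u a) (S.neg S.one)) = S.zero := by
    rw [sld_e_add_eq S, hQ0, hno, S.add_zero]
  have hd0 : S.add (S.u a) (S.neg S.one) = S.zero := by
    rcases sld_nzd S a _ ha hd_e hd.symm with h | h
    · exact absurd h hne
    · exact h
  have h6 : S.add (S.add (S.u a) (S.neg S.one)) S.one = S.u a := by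
    rw [← S.add_assoc, S.add_comm (S.neg S.one) S.one, S.add_neg S.one,
      sld_e_one S, S.add_zero]
  rw [hd0, sld_zero_add S] at h6
  exact h6.symm

theorem sld_mul_inv_one (a : A) (ha : S.e a = S.zero) (hne : a ≠ S.zero) :
    S.mul a (S.inv a) = S.one := by
  have hnea : a ≠ S.e a := fun hh => hne (hh.trans ha)
  rw [S.mul_inv a hnea]; exact sld_u_precise S a ha hne

theorem sld_e_inv (a : A) (ha : S.e a = S.zero) (hne : a ≠ S.zero) :
    S.e (S.inv a) = S.zero := by
  have h1 := S.e_mul a (S.inv a)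
  rw [sld_mul_inv_one S a ha hne, sld_e_one S, ha] at h1
  obtain ⟨z2, hz2⟩ := S.escala (S.inv a) a
  have hW0 : S.mul (S.e (S.inv a)) a = S.zero :=
    (sld_mag_sum_zero S (S.mul S.zero (S.inv a)) (S.mul (S.e (S.inv a)) a)
      h1.symm (sld_zero_le_zero_mul S (S.inv a))
      (by rw [hz2]; exact sld_zero_le_mag S z2)).2
  exact sld_mag_kill S (S.inv a) a ha hne hW0

end Aux

/-- The precise elements of a solid are closed under addition, negation,
multiplication and inversion of nonzero elements, and form an ordered field. -/
theorem stmt16 {A : Type*} (S : Solid A) :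
    -- closure
    (∀ a b, S.e a = S.zero → S.e b = S.zero → S.e (S.add a b) = S.zero) ∧
    (∀ a, S.e a = S.zero → S.e (S.neg a) = S.zero) ∧
    (∀ a b, S.e a = S.zero → S.e b = S.zero → S.e (S.mul a b) = S.zero) ∧
    (∀ a, S.e a = S.zero → a ≠ S.zero → S.e (S.inv a) = S.zero) ∧
    -- ordered-field structure on the precise elements
    (S.e S.zero = S.zero) ∧
    (S.e S.one = S.zero) ∧
    (S.one ≠ S.zero) ∧
    (∀ a, S.e a = S.zero → S.add a (S.neg a) = S.zero) ∧
    (∀ a, S.e a = S.zero → a ≠ S.zero → S.mul a (S.inv a) = S.one) ∧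
    (∀ a x y, S.e a = S.zero → S.e x = S.zero → S.e y = S.zero →
      S.mul a (S.add x y) = S.add (S.mul a x) (S.mul a y)) ∧
    (∀ a b c, S.e a = S.zero → S.e b = S.zero → S.e c = S.zero →
      S.le a b → S.le (S.add a c) (S.add b c)) ∧
    (∀ a b, S.e a = S.zero → S.e b = S.zero →
      S.le S.zero a → S.le S.zero b → S.le S.zero (S.mul a b)) := by
  refine ⟨?_, ?_, ?_, ?_, sld_e_zero S, sld_e_one S, sld_one_ne_zero S, ?_, ?_, ?_, ?_, ?_⟩
  · intro a b ha hb
    rcases S.e_add a b with h | h <;> rw [h] <;> assumption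
  · intro a ha; rw [S.e_neg, ha]
  · intro a b ha hb
    rw [S.e_mul, ha, hb, sld_zero_mul_precise S b hb, sld_zero_mul_precise S a ha,
      S.add_zero]
  · intro a ha hne; exact sld_e_inv S a ha hne
  · intro a ha; rw [S.add_neg, ha]
  · intro a ha hne; exact sld_mul_inv_one S a ha hne
  · intro a x y ha hx hy
    have hd := S.dist a x y
    rw [ha, sld_zero_mul_precise S x hx, sld_zero_mul_precise S y hy, S.add_zero,
      S.add_zero] at hd
    exact hd.symm
  · intro a b c _ _ _ h; exact S.add_le_add a b c h
  · intro a b ha hb ha0 hb0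
    by_cases h0 : a = S.zero
    · rw [h0]; exact sld_zero_le_zero_mul S b
    · have hea : S.le (S.e a) a := by rw [ha]; exact ha0
      have hnea : S.e a ≠ a := by rw [ha]; exact fun hh => h0 hh.symm
      have h1 := S.compat_mul a S.zero b hea hnea hb0
      have h2 : S.le S.zero (S.mul a S.zero) := by
        rw [S.mul_comm]; exact sld_zero_le_zero_mul S a
      exact S.le_trans _ _ _ h2 h1
end

section
/- In a solid, every individualized unity expands as u(x) = 1 + e(u(x)) for zeroless x, where 1 is the multiplicative identity. -/
namespace SolidAux

variable {A : Type*} (S : Solid A)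

/-- 0 + x = x -/
theorem zero_add (x : A) : S.add S.zero x = x := by
  rw [S.add_comm]; exact S.add_zero x

/-- e x + e x = e x -/
theorem e_idem (x : A) : S.add (S.e x) (S.e x) = S.e x :=
  S.e_max x (S.e x) (S.add_e x)

/-- e (e x) = e x -/
theorem e_e (x : A) : S.e (S.e x) = S.e x := by
  have h1 : S.add (S.e (S.e x)) (S.e x) = S.e (S.e x) :=
    S.e_max (S.e x) (S.e x) (e_idem S x)
  have h2 : S.add (S.e x) (S.e (S.e x)) = S.e x := S.add_e (S.e x)
  calc S.e (S.e x) = S.add (S.e (S.e x)) (S.e x) := h1.symm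
    _ = S.add (S.e x) (S.e (S.e x)) := S.add_comm _ _
    _ = S.e x := h2

/-- e 0 = 0 -/
theorem zero_e : S.e S.zero = S.zero := by
  have h1 : S.add S.zero (S.e S.zero) = S.zero := S.add_e S.zero
  have h2 : S.add S.zero (S.e S.zero) = S.e S.zero := by
    rw [S.add_comm]; exact S.add_zero _
  exact h2.symm.trans h1

/-- mutual absorption gives equality -/
theorem mabsorb {p q : A} (h1 : S.add p q = p) (h2 : S.add q p = q) : p = q := by
  rw [← h1, S.add_comm, h2]

theorem e_absorb_left (x y : A) : S.add (S.e (S.add x y)) (S.e x) = S.e (S.add x y) := by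
  apply S.e_max
  calc S.add (S.add x y) (S.e x) = S.add (S.add y x) (S.e x) := by rw [S.add_comm x y]
    _ = S.add y (S.add x (S.e x)) := (S.add_assoc _ _ _).symm
    _ = S.add y x := by rw [S.add_e]
    _ = S.add x y := S.add_comm _ _

theorem e_absorb_right (x y : A) : S.add (S.e (S.add x y)) (S.e y) = S.e (S.add x y) := by
  apply S.e_max
  calc S.add (S.add x y) (S.e y) = S.add x (S.add y (S.e y)) := (S.add_assoc _ _ _).symm
    _ = S.add x y := by rw [S.add_e]

/-- e (x + y) = e x + e y -/
theorem e_add_eq (x y : A) : S.e (S.add x y) = S.add (S.e x) (S.e y) := by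
  rcases S.e_add x y with h | h
  · rw [h]
    have := e_absorb_right S x y
    rw [h] at this
    exact this.symm
  · rw [h]
    have := e_absorb_left S x y
    rw [h] at this
    rw [S.add_comm]
    exact this.symm

/-- neg 0 = 0 -/
theorem neg_zero : S.neg S.zero = S.zero := by
  have h1 : S.add S.zero (S.neg S.zero) = S.e S.zero := S.add_neg S.zero
  rw [zero_e S] at h1
  have h2 : S.add S.zero (S.neg S.zero) = S.neg S.zero := by
    rw [S.add_comm]; exact S.add_zero _
  exact h2.symm.trans h1

/-- neg of a neutrix -/
theorem neg_e (v : A) : S.neg (S.e v) = S.e v := by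
  have h1 : S.add (S.e v) (S.neg (S.e v)) = S.e v := by
    rw [S.add_neg, e_e]
  have h2 : S.add (S.neg (S.e v)) (S.e v) = S.neg (S.e v) := by
    have := S.add_e (S.neg (S.e v))
    rw [S.e_neg, e_e] at this
    exact this
  exact (mabsorb S h1 h2).symm

/-- uniqueness of negatives -/
theorem neg_uniq {q w1 w2 : A} (h1 : S.add q w1 = S.e q) (h2 : S.add q w2 = S.e q)
    (e1 : S.e w1 = S.e q) (e2 : S.e w2 = S.e q) : w1 = w2 := by
  calc w1 = S.add w1 (S.e w1) := (S.add_e w1).symm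
    _ = S.add w1 (S.add q w2) := by rw [e1, ← h2]
    _ = S.add (S.add w1 q) w2 := S.add_assoc _ _ _
    _ = S.add (S.add q w1) w2 := by rw [S.add_comm w1 q]
    _ = S.add (S.e q) w2 := by rw [h1]
    _ = S.add w2 (S.e q) := S.add_comm _ _
    _ = S.add w2 (S.e w2) := by rw [e2]
    _ = w2 := S.add_e w2

/-- neg neg p = p -/
theorem neg_neg (p : A) : S.neg (S.neg p) = p := by
  apply neg_uniq S (q := S.neg p)
  · exact S.add_neg (S.neg p)
  · rw [S.add_comm]; rw [S.e_neg]; exact S.add_neg p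
  · rw [S.e_neg, S.e_neg]
  · rw [S.e_neg]

/-- 0 ≤ e w -/
theorem le_zero_e (w : A) : S.le S.zero (S.e w) := by
  have h : S.add S.zero (S.e w) = S.e w := zero_add S _
  exact (S.le_e w S.zero h).1

/-- a neutrix ≤ a neutrix gives absorption -/
theorem nabsorb {v w : A} (h : S.le (S.e v) (S.e w)) :
    S.add (S.e v) (S.e w) = S.e w := by
  apply S.le_antisymm
  · have := S.add_le_add (S.e v) (S.e w) (S.e w) h
    rw [e_idem S w] at this
    exact this
  · have := S.add_le_add S.zero (S.e v) (S.e w) (le_zero_e S v)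
    rw [zero_add S] at this
    exact this

/-- absorption is transitive -/
theorem absorb_trans {n m k : A} (h1 : S.add n m = m) (h2 : S.add m k = k) :
    S.add n k = k := by
  calc S.add n k = S.add n (S.add m k) := by rw [h2]
    _ = S.add (S.add n m) k := S.add_assoc _ _ _
    _ = S.add m k := by rw [h1]
    _ = k := h2

/-- absorbed into e y means absorbed into y -/
theorem absorb_into {n y : A} (h : S.add n (S.e y) = S.e y) : S.add y n = y := by
  calc S.add y n = S.add (S.add y (S.e y)) n := by rw [S.add_e]
    _ = S.add y (S.add (S.e y) n) := (S.add_assoc _ _ _).symm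
    _ = S.add y (S.add n (S.e y)) := by rw [S.add_comm (S.e y) n]
    _ = S.add y (S.e y) := by rw [h]
    _ = y := S.add_e y

theorem mul_one (x : A) : S.mul x S.one = x := by
  rw [S.mul_comm]; exact S.one_mul x


theorem keygen_pos (w c : A) (hw : w ≠ S.e w) (hd : w = S.add c (S.e w))
    (hc : S.e c = S.zero) (hEw : S.mul (S.e w) w = S.e w) (hc0 : S.le S.zero c) :
    S.mul (S.e w) c = S.e w := by
  -- E ≤ c
  have hEc : S.le (S.e w) c := by
    rcases S.le_total c (S.e w) with h | h
    · exfalso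
      apply hw
      apply S.le_antisymm
      · have h1 := S.add_le_add c (S.e w) (S.e w) h
        rw [e_idem S w] at h1
        rwa [← hd] at h1
      · have h2 := S.add_le_add S.zero c (S.e w) hc0
        rw [zero_add S] at h2
        rwa [← hd] at h2
    · exact h
  -- c ≤ w
  have hcw : S.le c w := by
    have h2 := S.add_le_add S.zero (S.e w) c (le_zero_e S w)
    rw [zero_add S] at h2
    have : S.add (S.e w) c = w := by rw [S.add_comm, ← hd]
    rw [this] at h2
    exact h2
  obtain ⟨z1, hz1⟩ := S.escala w c
  obtain ⟨z2, hz2⟩ := S.escala w (S.e w)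
  -- E·c absorbed by E
  have hNE : S.le (S.mul (S.e w) c) (S.e w) := by
    have := S.amplification w c w (by rw [hc]; exact hc0) hcw
    rw [hEw] at this
    exact this
  have habsNE : S.add (S.mul (S.e w) c) (S.e w) = S.e w := by
    have h := nabsorb S (v := z1) (w := w) (by rw [← hz1]; exact hNE)
    rw [← hz1] at h
    exact h
  -- E·E absorbed by E·c
  have hE2 : S.le (S.mul (S.e w) (S.e w)) (S.mul (S.e w) c) := by
    apply S.amplification w (S.e w) c _ hEc
    rw [e_e]
    exact S.le_refl _
  have habsE2 : S.add (S.mul (S.e w) (S.e w)) (S.mul (S.e w) c) = S.mul (S.e w) c := by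
    have h := nabsorb S (v := z2) (w := z1) (by rw [← hz1, ← hz2]; exact hE2)
    rw [← hz1, ← hz2] at h
    exact h
  -- dist identity
  have hdist := S.dist (S.e w) c (S.e w)
  rw [e_e S w] at hdist
  rw [show S.add c (S.e w) = w from hd.symm] at hdist
  rw [hEw] at hdist
  -- hdist : (E·c) + (E·E) = (E + E·c) + E·E
  have hL : S.add (S.mul (S.e w) c) (S.mul (S.e w) (S.e w)) = S.mul (S.e w) c := by
    rw [S.add_comm]; exact habsE2
  have key : S.mul (S.e w) c = S.add (S.e w) (S.mul (S.e w) c) := by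
    calc S.mul (S.e w) c
        = S.add (S.mul (S.e w) c) (S.mul (S.e w) (S.e w)) := hL.symm
      _ = S.add (S.add (S.e w) (S.mul (S.e w) c)) (S.mul (S.e w) (S.e w)) := hdist
      _ = S.add (S.e w) (S.add (S.mul (S.e w) c) (S.mul (S.e w) (S.e w))) :=
          (S.add_assoc _ _ _).symm
      _ = S.add (S.e w) (S.mul (S.e w) c) := by rw [hL]
  calc S.mul (S.e w) c = S.add (S.e w) (S.mul (S.e w) c) := key
    _ = S.add (S.mul (S.e w) c) (S.e w) := S.add_comm _ _
    _ = S.e w := habsNE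

theorem keygen (w c : A) (hw : w ≠ S.e w) (hd : w = S.add c (S.e w))
    (hc : S.e c = S.zero) (hEw : S.mul (S.e w) w = S.e w) :
    S.mul (S.e w) c = S.e w := by
  rcases S.le_total S.zero c with h | h
  · exact keygen_pos S w c hw hd hc hEw h
  · -- negative case
    have hc0' : S.le S.zero (S.neg c) := by
      have h1 := S.add_le_add c S.zero (S.neg c) h
      rw [S.add_neg, hc, zero_add S] at h1
      exact h1
    have hd' : S.neg w = S.add (S.neg c) (S.e w) := by
      apply neg_uniq S (q := w)
      · exact S.add_neg w
      · calc S.add w (S.add (S.neg c) (S.e w))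
            = S.add (S.add c (S.e w)) (S.add (S.neg c) (S.e w)) := by rw [← hd]
          _ = S.add c (S.add (S.e w) (S.add (S.neg c) (S.e w))) := (S.add_assoc _ _ _).symm
          _ = S.add c (S.add (S.add (S.e w) (S.neg c)) (S.e w)) := by
              rw [S.add_assoc (S.e w) (S.neg c) (S.e w)]
          _ = S.add c (S.add (S.add (S.neg c) (S.e w)) (S.e w)) := by
              rw [S.add_comm (S.e w) (S.neg c)]
          _ = S.add c (S.add (S.neg c) (S.add (S.e w) (S.e w))) := by
              rw [← S.add_assoc (S.neg c) (S.e w) (S.e w)]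
          _ = S.add c (S.add (S.neg c) (S.e w)) := by rw [e_idem S w]
          _ = S.add (S.add c (S.neg c)) (S.e w) := S.add_assoc _ _ _
          _ = S.add (S.e c) (S.e w) := by rw [S.add_neg]
          _ = S.e w := by rw [hc, zero_add S]
      · rw [S.e_neg]
      · rw [e_add_eq, S.e_neg, hc, e_e, zero_add S]
    have hw' : S.neg w ≠ S.e (S.neg w) := by
      rw [S.e_neg]
      intro hh
      apply hw
      calc w = S.neg (S.neg w) := (neg_neg S w).symm
        _ = S.neg (S.e w) := by rw [hh]
        _ = S.e w := neg_e S w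
    have hEw' : S.mul (S.e (S.neg w)) (S.neg w) = S.e (S.neg w) := by
      rw [S.e_neg]
      calc S.mul (S.e w) (S.neg w) = S.mul (S.neg w) (S.e w) := S.mul_comm _ _
        _ = S.neg (S.mul w (S.e w)) := (S.neg_mul w (S.e w)).symm
        _ = S.neg (S.mul (S.e w) w) := by rw [S.mul_comm]
        _ = S.neg (S.e w) := by rw [hEw]
        _ = S.e w := neg_e S w
    have hres := keygen_pos S (S.neg w) (S.neg c) hw'
      (by rw [S.e_neg]; exact hd') (by rw [S.e_neg, hc]) hEw' hc0'
    rw [S.e_neg] at hres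
    -- hres : E · neg c = E ; convert to E · c = E
    obtain ⟨z1, hz1⟩ := S.escala w c
    calc S.mul (S.e w) c = S.e z1 := hz1
      _ = S.neg (S.e z1) := (neg_e S z1).symm
      _ = S.neg (S.mul (S.e w) c) := by rw [hz1]
      _ = S.neg (S.mul c (S.e w)) := by rw [S.mul_comm]
      _ = S.mul (S.neg c) (S.e w) := S.neg_mul c (S.e w)
      _ = S.mul (S.e w) (S.neg c) := S.mul_comm _ _
      _ = S.e w := hres

theorem one_ne (x : A) (hx : x ≠ S.e x) : S.one ≠ S.e S.one := by
  intro h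
  obtain ⟨z, hz⟩ := S.escala S.one x
  apply hx
  have hxz : x = S.e z := by
    calc x = S.mul S.one x := (S.one_mul x).symm
      _ = S.mul (S.e S.one) x := by rw [← h]
      _ = S.e z := hz
  rw [hxz, e_e]

theorem e_one (x : A) (hx : x ≠ S.e x) : S.e S.one = S.zero := by
  obtain ⟨c, hc1, hc0⟩ := S.decomp S.one
  have hk := keygen S S.one c (one_ne S x hx) hc1 hc0
    (by rw [S.mul_comm]; exact S.one_mul _)
  have hm := S.e_mul S.one c
  rw [S.one_mul, hc0, hk] at hm
  have h01 : S.mul S.zero S.one = S.zero := by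
    rw [S.mul_comm]; exact S.one_mul _
  rw [h01, S.add_zero] at hm
  exact hm.symm

theorem zero_le_one (x : A) (hx : x ≠ S.e x) : S.le S.zero S.one := by
  rcases S.le_total S.one S.zero with h | h
  · exfalso
    have h1 := S.add_le_add S.one S.zero (S.neg S.one) h
    rw [S.add_neg, e_one S x hx, zero_add S] at h1
    -- h1 : 0 ≤ neg 1
    have hne : S.neg S.one ≠ S.zero := by
      intro hh
      apply one_ne S x hx
      have := S.add_neg S.one
      rw [hh, S.add_zero, e_one S x hx] at this
      rw [e_one S x hx]; exact this
    have hcm := S.compat_mul (S.neg S.one) S.one S.zero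
      (by rw [S.e_neg, e_one S x hx]; exact h1)
      (by rw [S.e_neg, e_one S x hx]; exact fun hh => hne hh.symm) h
    have hm1 : S.mul (S.neg S.one) S.one = S.neg S.one := by
      rw [S.mul_comm]
      calc S.mul S.one (S.neg S.one) = S.mul (S.neg S.one) S.one := S.mul_comm _ _
        _ = S.neg (S.mul S.one S.one) := (S.neg_mul S.one S.one).symm
        _ = S.neg S.one := by rw [S.one_mul]
    have hm0 : S.mul (S.neg S.one) S.zero = S.zero := by
      calc S.mul (S.neg S.one) S.zero = S.neg (S.mul S.one S.zero) :=
            (S.neg_mul S.one S.zero).symm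
        _ = S.neg S.zero := by rw [S.one_mul]
        _ = S.zero := neg_zero S
    rw [hm1, hm0] at hcm
    -- hcm : neg 1 ≤ 0, h1 : 0 ≤ neg 1
    have := S.le_antisymm _ _ hcm h1
    exact hne this
  · exact h

/-- precise zeroless idempotents equal one -/
theorem prec_idem (p : A) (hone : S.e S.one = S.zero)
    (hp : p ≠ S.e p) (hep : S.e p = S.zero) (hpp : S.mul p p = p) : p = S.one := by
  -- 0 * p = 0
  have h0p : S.mul S.zero p = S.zero := by
    have hm := S.e_mul p p
    rw [hpp, hep] at hm
    obtain ⟨z, hz⟩ := S.escala p p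
    rw [hep] at hz
    -- hm : 0 = 0*p + 0*p
    have hid : S.add (S.mul S.zero p) (S.mul S.zero p) = S.mul S.zero p := by
      rw [hz, e_idem]
    rw [hid] at hm
    exact hm.symm
  have hp0 : S.mul p S.zero = S.zero := by rw [S.mul_comm]; exact h0p
  have hnp0 : S.mul (S.neg p) S.zero = S.zero := by
    rw [← S.neg_mul, hp0, neg_zero]
  have h0np : S.mul S.zero (S.neg p) = S.zero := by rw [S.mul_comm]; exact hnp0
  set s := S.add S.one (S.neg p) with hs
  have hes : S.e s = S.zero := by
    rw [hs, e_add_eq, hone, S.e_neg, hep, S.add_zero]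
  have hpnegp : S.mul p (S.neg p) = S.neg p := by
    calc S.mul p (S.neg p) = S.mul (S.neg p) p := S.mul_comm _ _
      _ = S.neg (S.mul p p) := (S.neg_mul p p).symm
      _ = S.neg p := by rw [hpp]
  -- p * s = 0
  have hps : S.mul p s = S.zero := by
    have hd := S.dist p S.one (S.neg p)
    rw [hep] at hd
    rw [mul_one S p, hpnegp] at hd
    rw [S.add_neg p, hep] at hd
    have h01 : S.mul S.zero S.one = S.zero := by rw [S.mul_comm]; exact S.one_mul _
    rw [h01, h0np, S.add_zero, S.add_zero] at hd
    exact hd.symm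
  -- s * s = s
  have hss : S.mul s s = s := by
    have hd := S.dist s S.one (S.neg p)
    rw [hes] at hd
    have h01 : S.mul S.zero S.one = S.zero := by rw [S.mul_comm]; exact S.one_mul _
    rw [h01, h0np, S.add_zero, S.add_zero] at hd
    rw [mul_one S s] at hd
    have hsnegp : S.mul s (S.neg p) = S.zero := by
      calc S.mul s (S.neg p) = S.mul (S.neg p) s := S.mul_comm _ _
        _ = S.neg (S.mul p s) := (S.neg_mul p s).symm
        _ = S.neg S.zero := by rw [hps]
        _ = S.zero := neg_zero S
    rw [hsnegp, S.add_zero] at hd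
    exact hd.symm
  have hp_s : S.add p s = S.one := by
    rw [hs]
    calc S.add p (S.add S.one (S.neg p))
        = S.add p (S.add (S.neg p) S.one) := by rw [S.add_comm S.one (S.neg p)]
      _ = S.add (S.add p (S.neg p)) S.one := S.add_assoc _ _ _
      _ = S.add (S.e p) S.one := by rw [S.add_neg]
      _ = S.add S.zero S.one := by rw [hep]
      _ = S.one := zero_add S _
  by_cases hs0 : s = S.zero
  · rw [hs0, S.add_zero] at hp_s
    exact hp_s
  · exfalso
    -- s zeroless
    have hsz : s ≠ S.e s := by rw [hes]; exact hs0
    -- 0 ≤ p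
    have hp_pos : S.le S.zero p := by
      rcases S.le_total p S.zero with h | h
      · exfalso
        have h1 := S.add_le_add p S.zero (S.neg p) h
        rw [S.add_neg, hep, zero_add S] at h1
        have hnpne : S.neg p ≠ S.zero := by
          intro hh
          apply hp
          have := S.add_neg p
          rw [hh, S.add_zero, hep] at this
          rw [hep]; exact this
        have hnpnp : S.mul (S.neg p) (S.neg p) = p := by
          calc S.mul (S.neg p) (S.neg p) = S.neg (S.mul p (S.neg p)) :=
                (S.neg_mul p (S.neg p)).symm
            _ = S.neg (S.neg p) := by rw [hpnegp]
            _ = p := neg_neg S p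
        have hcm := S.compat_mul (S.neg p) S.zero (S.neg p)
          (by rw [S.e_neg, hep]; exact h1)
          (by rw [S.e_neg, hep]; exact fun hh => hnpne hh.symm) h1
        rw [hnp0, hnpnp] at hcm
        -- hcm : 0 ≤ p ; h : p ≤ 0
        have hp0' := S.le_antisymm _ _ h hcm
        apply hp
        rw [hep]; exact hp0' 
      · exact h
    -- 0 ≤ s
    have hs_pos : S.le S.zero s := by
      rcases S.le_total s S.zero with h | h
      · exfalso
        have h0s : S.mul S.zero s = S.zero := by
          have hm := S.e_mul s s
          rw [hss, hes] at hm
          obtain ⟨z, hz⟩ := S.escala s s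
          rw [hes] at hz
          have hid : S.add (S.mul S.zero s) (S.mul S.zero s) = S.mul S.zero s := by
            rw [hz, e_idem]
          rw [hid] at hm
          exact hm.symm
        have hs0' : S.mul s S.zero = S.zero := by rw [S.mul_comm]; exact h0s
        have hns0 : S.mul (S.neg s) S.zero = S.zero := by
          rw [← S.neg_mul, hs0', neg_zero]
        have h1 := S.add_le_add s S.zero (S.neg s) h
        rw [S.add_neg, hes, zero_add S] at h1
        have hnsne : S.neg s ≠ S.zero := by
          intro hh
          apply hsz
          have := S.add_neg s
          rw [hh, S.add_zero, hes] at this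
          rw [hes]; exact this
        have hsnegs : S.mul s (S.neg s) = S.neg s := by
          calc S.mul s (S.neg s) = S.mul (S.neg s) s := S.mul_comm _ _
            _ = S.neg (S.mul s s) := (S.neg_mul s s).symm
            _ = S.neg s := by rw [hss]
        have hnsns : S.mul (S.neg s) (S.neg s) = s := by
          calc S.mul (S.neg s) (S.neg s) = S.neg (S.mul s (S.neg s)) :=
                (S.neg_mul s (S.neg s)).symm
            _ = S.neg (S.neg s) := by rw [hsnegs]
            _ = s := neg_neg S s
        have hcm := S.compat_mul (S.neg s) S.zero (S.neg s)
          (by rw [S.e_neg, hes]; exact h1)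
          (by rw [S.e_neg, hes]; exact fun hh => hnsne hh.symm) h1
        rw [hns0, hnsns] at hcm
        have hs0'' := S.le_antisymm _ _ h hcm
        apply hsz
        rw [hes]; exact hs0'' 
      · exact h
    rcases S.le_total p s with h | h
    · -- p ≤ s : multiply by p
      have hcm := S.compat_mul p p s (by rw [hep]; exact hp_pos)
        (by rw [hep]; exact fun hh => hp (hh.symm.trans hep.symm)) h
      rw [hpp, hps] at hcm
      -- hcm : p ≤ 0
      have := S.le_antisymm _ _ hcm hp_pos
      exact hp (by rw [hep]; exact this)
    · -- s ≤ p : multiply by s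
      have hcm := S.compat_mul s s p (by rw [hes]; exact hs_pos)
        (by rw [hes]; exact fun hh => hsz (hh.symm.trans hes.symm)) h
      have hsp : S.mul s p = S.zero := by rw [S.mul_comm]; exact hps
      rw [hss, hsp] at hcm
      have := S.le_antisymm _ _ hcm hs_pos
      exact hsz (by rw [hes]; exact this)


end SolidAux

open SolidAux in
theorem stmt18 {A : Type*} (S : Solid A) (x : A) (hx : x ≠ S.e x) :
    S.u x = S.add S.one (S.e (S.u x)) := by
  -- u is zeroless
  have hu : S.u x ≠ S.e (S.u x) := by
    intro h
    obtain ⟨z0, hz0⟩ := S.escala (S.u x) x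
    apply hx
    have hxz : x = S.e z0 := by
      calc x = S.mul x (S.u x) := (S.mul_u x hx).symm
        _ = S.mul x (S.e (S.u x)) := by rw [← h]
        _ = S.mul (S.e (S.u x)) x := S.mul_comm _ _
        _ = S.e z0 := hz0
    rw [hxz, e_e]
  -- u · u = u
  have huu : S.mul (S.u x) (S.u x) = S.u x := S.u_max x hx (S.u x) (S.mul_u x hx)
  -- u (u) = u
  have hdu : S.u (S.u x) = S.u x := by
    have h1 := S.u_max (S.u x) hu (S.u x) huu
    have h2 := S.mul_u (S.u x) hu
    calc S.u (S.u x) = S.mul (S.u (S.u x)) (S.u x) := h1.symm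
      _ = S.mul (S.u x) (S.u (S.u x)) := S.mul_comm _ _
      _ = S.u x := h2
  -- inv u zeroless
  have hinv_ne : S.inv (S.u x) ≠ S.e (S.inv (S.u x)) := by
    intro h
    obtain ⟨z1, hz1⟩ := S.escala (S.inv (S.u x)) (S.u x)
    apply hu
    have : S.u x = S.e z1 := by
      calc S.u x = S.u (S.u x) := hdu.symm
        _ = S.mul (S.u x) (S.inv (S.u x)) := (S.mul_inv (S.u x) hu).symm
        _ = S.mul (S.u x) (S.e (S.inv (S.u x))) := by rw [← h]
        _ = S.mul (S.e (S.inv (S.u x))) (S.u x) := S.mul_comm _ _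
        _ = S.e z1 := hz1
    rw [this, e_e]
  -- inv u = u
  have hinv : S.inv (S.u x) = S.u x := by
    have h3 := S.mul_inv (S.u x) hu
    rw [hdu] at h3
    have h4 := S.u_inv (S.u x) hu
    rw [hdu] at h4
    have h5 := S.mul_u (S.inv (S.u x)) hinv_ne
    rw [h4] at h5
    calc S.inv (S.u x) = S.mul (S.inv (S.u x)) (S.u x) := h5.symm
      _ = S.mul (S.u x) (S.inv (S.u x)) := S.mul_comm _ _
      _ = S.u x := h3
  -- e(u) · u = e(u)
  have hEu : S.mul (S.e (S.u x)) (S.u x) = S.e (S.u x) := by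
    have h6 := S.e_u (S.u x) hu
    rw [hdu, hinv] at h6
    exact h6.symm
  have hueu : S.mul (S.u x) (S.e (S.u x)) = S.e (S.u x) := by
    rw [S.mul_comm]; exact hEu
  -- e(u) absorbs e(u)·e(u)
  have hE2 : S.add (S.e (S.u x)) (S.mul (S.e (S.u x)) (S.e (S.u x))) = S.e (S.u x) := by
    have h7 := S.e_mul (S.e (S.u x)) (S.u x)
    rw [hEu] at h7
    rw [e_e S (S.u x)] at h7
    rw [hEu] at h7
    exact h7.symm
  have hE2' : S.add (S.mul (S.e (S.u x)) (S.e (S.u x))) (S.e (S.u x)) = S.e (S.u x) := by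
    rw [S.add_comm]; exact hE2
  -- decomposition of u
  obtain ⟨a, hda, ha0⟩ := S.decomp (S.u x)
  have hEa : S.mul (S.e (S.u x)) a = S.e (S.u x) := keygen S (S.u x) a hu hda ha0 hEu
  have hone : S.e S.one = S.zero := e_one S x hx
  have h01le : S.le S.zero S.one := zero_le_one S x hx
  have hEu1 : S.mul (S.e (S.u x)) S.one = S.e (S.u x) := mul_one S _
  -- m : u = u·z + e u
  have hm : S.u x
      = S.add (S.mul (S.u x) (S.add S.one (S.e (S.u x)))) (S.e (S.u x)) := by
    have hd := S.dist (S.u x) S.one (S.e (S.u x))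
    rw [mul_one S (S.u x), hueu, hEu1, S.add_e (S.u x)] at hd
    calc S.u x
        = S.add (S.add (S.mul (S.u x) (S.add S.one (S.e (S.u x)))) (S.e (S.u x)))
            (S.mul (S.e (S.u x)) (S.e (S.u x))) := hd
      _ = S.add (S.mul (S.u x) (S.add S.one (S.e (S.u x))))
            (S.add (S.e (S.u x)) (S.mul (S.e (S.u x)) (S.e (S.u x)))) :=
          (S.add_assoc _ _ _).symm
      _ = S.add (S.mul (S.u x) (S.add S.one (S.e (S.u x)))) (S.e (S.u x)) := by rw [hE2]
  -- e z = e u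
  have hez : S.e (S.add S.one (S.e (S.u x))) = S.e (S.u x) := by
    rw [e_add_eq, hone, e_e, zero_add S]
  -- z zeroless
  have hzne : S.add S.one (S.e (S.u x)) ≠ S.e (S.add S.one (S.e (S.u x))) := by
    rw [hez]
    intro h
    apply hu
    rw [h, hueu, e_idem S (S.u x)] at hm
    exact hm
  -- e(u)·z = e(u)
  have hn : S.mul (S.e (S.u x)) (S.add S.one (S.e (S.u x))) = S.e (S.u x) := by
    have hd3 := S.dist (S.e (S.u x)) S.one (S.e (S.u x))
    rw [e_e S (S.u x), hEu1] at hd3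
    -- hd3 : e u + E2 = ((e u)·z + e u) + E2
    have hi : S.add (S.mul (S.e (S.u x)) (S.add S.one (S.e (S.u x)))) (S.e (S.u x))
        = S.e (S.u x) := by
      have : S.e (S.u x)
          = S.add (S.mul (S.e (S.u x)) (S.add S.one (S.e (S.u x)))) (S.e (S.u x)) := by
        calc S.e (S.u x)
            = S.add (S.e (S.u x)) (S.mul (S.e (S.u x)) (S.e (S.u x))) := hE2.symm
          _ = S.add (S.add (S.mul (S.e (S.u x)) (S.add S.one (S.e (S.u x)))) (S.e (S.u x)))
                (S.mul (S.e (S.u x)) (S.e (S.u x))) := hd3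
          _ = S.add (S.mul (S.e (S.u x)) (S.add S.one (S.e (S.u x))))
                (S.add (S.e (S.u x)) (S.mul (S.e (S.u x)) (S.e (S.u x)))) :=
              (S.add_assoc _ _ _).symm
          _ = S.add (S.mul (S.e (S.u x)) (S.add S.one (S.e (S.u x)))) (S.e (S.u x)) := by
              rw [hE2]
      exact this.symm
    have h1z : S.le S.one (S.add S.one (S.e (S.u x))) := by
      have h2z := S.add_le_add S.zero (S.e (S.u x)) S.one (le_zero_e S (S.u x))
      rw [zero_add S] at h2z
      rw [S.add_comm S.one (S.e (S.u x))]
      exact h2z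
    have hamp := S.amplification (S.u x) S.one (S.add S.one (S.e (S.u x)))
      (by rw [hone]; exact h01le) h1z
    rw [hEu1] at hamp
    obtain ⟨z2, hz2⟩ := S.escala (S.u x) (S.add S.one (S.e (S.u x)))
    have hii : S.add (S.e (S.u x)) (S.mul (S.e (S.u x)) (S.add S.one (S.e (S.u x))))
        = S.mul (S.e (S.u x)) (S.add S.one (S.e (S.u x))) := by
      have h := nabsorb S (v := S.u x) (w := z2) (by rw [← hz2]; exact hamp)
      rw [← hz2] at h
      exact h
    have := mabsorb S (p := S.e (S.u x))
      (q := S.mul (S.e (S.u x)) (S.add S.one (S.e (S.u x))))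
      (by rw [S.add_comm]; exact hi) (by rw [S.add_comm]; exact hii)
    exact this.symm
  have hzeu : S.mul (S.add S.one (S.e (S.u x))) (S.e (S.u x)) = S.e (S.u x) := by
    rw [S.mul_comm]; exact hn
  -- e (u·z) = e u
  have ho : S.e (S.mul (S.u x) (S.add S.one (S.e (S.u x)))) = S.e (S.u x) := by
    have h8 := S.e_mul (S.u x) (S.add S.one (S.e (S.u x)))
    rw [hez, hn, hEu, e_idem S (S.u x)] at h8
    exact h8
  -- u·z = u
  have hp' : S.mul (S.u x) (S.add S.one (S.e (S.u x))) = S.u x := by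
    have h9 := S.add_e (S.mul (S.u x) (S.add S.one (S.e (S.u x))))
    rw [ho] at h9
    exact (hm.trans h9).symm
  have hzu : S.mul (S.add S.one (S.e (S.u x))) (S.u x) = S.u x := by
    rw [S.mul_comm]; exact hp'
  -- z·z = z
  have hq : S.mul (S.add S.one (S.e (S.u x))) (S.add S.one (S.e (S.u x)))
      = S.add S.one (S.e (S.u x)) := by
    have hd4 := S.dist (S.add S.one (S.e (S.u x))) S.one (S.e (S.u x))
    rw [hez, mul_one S, hzeu, hEu1] at hd4
    have hze : S.add (S.add S.one (S.e (S.u x))) (S.e (S.u x)) = S.add S.one (S.e (S.u x)) := by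
      have := S.add_e (S.add S.one (S.e (S.u x)))
      rw [hez] at this
      exact this
    rw [hze] at hd4
    -- hd4 : z = (z·z + e u) + E2
    have hzz : S.add S.one (S.e (S.u x))
        = S.add (S.mul (S.add S.one (S.e (S.u x))) (S.add S.one (S.e (S.u x)))) (S.e (S.u x)) := by
      calc S.add S.one (S.e (S.u x))
          = S.add (S.add (S.mul (S.add S.one (S.e (S.u x))) (S.add S.one (S.e (S.u x))))
              (S.e (S.u x))) (S.mul (S.e (S.u x)) (S.e (S.u x))) := hd4
        _ = S.add (S.mul (S.add S.one (S.e (S.u x))) (S.add S.one (S.e (S.u x))))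
              (S.add (S.e (S.u x)) (S.mul (S.e (S.u x)) (S.e (S.u x)))) :=
            (S.add_assoc _ _ _).symm
        _ = S.add (S.mul (S.add S.one (S.e (S.u x))) (S.add S.one (S.e (S.u x))))
              (S.e (S.u x)) := by rw [hE2]
    have hezz : S.e (S.mul (S.add S.one (S.e (S.u x))) (S.add S.one (S.e (S.u x))))
        = S.e (S.u x) := by
      have := S.e_mul (S.add S.one (S.e (S.u x))) (S.add S.one (S.e (S.u x)))
      rw [hez, hn, e_idem S (S.u x)] at this
      exact this
    have h10 := S.add_e (S.mul (S.add S.one (S.e (S.u x))) (S.add S.one (S.e (S.u x))))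
    rw [hezz] at h10
    exact (hzz.trans h10).symm
  -- u(z) = z
  have hr : S.u (S.add S.one (S.e (S.u x))) = S.add S.one (S.e (S.u x)) := by
    have h11 := S.u_max (S.add S.one (S.e (S.u x))) hzne (S.add S.one (S.e (S.u x))) hq
    have h12 := S.mul_u (S.add S.one (S.e (S.u x))) hzne
    calc S.u (S.add S.one (S.e (S.u x)))
        = S.mul (S.u (S.add S.one (S.e (S.u x)))) (S.add S.one (S.e (S.u x))) := h11.symm
      _ = S.mul (S.add S.one (S.e (S.u x))) (S.u (S.add S.one (S.e (S.u x)))) :=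
          S.mul_comm _ _
      _ = S.add S.one (S.e (S.u x)) := h12
  -- e(u)·0 absorbed by e(u)
  have hE0abs : S.add (S.mul (S.e (S.u x)) S.zero) (S.e (S.u x)) = S.e (S.u x) := by
    have hE0 := S.amplification (S.u x) S.zero (S.e (S.u x))
      (by rw [zero_e]; exact S.le_refl _) (le_zero_e S (S.u x))
    obtain ⟨z3, h3z⟩ := S.escala (S.u x) S.zero
    obtain ⟨z4, h4z⟩ := S.escala (S.u x) (S.e (S.u x))
    have h := nabsorb S (v := z3) (w := z4) (by rw [← h3z, ← h4z]; exact hE0)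
    rw [← h3z, ← h4z] at h
    exact absorb_trans S h hE2'
  have hE0abs' : S.add (S.e (S.u x)) (S.mul (S.e (S.u x)) S.zero) = S.e (S.u x) := by
    rw [S.add_comm]; exact hE0abs
  -- z·0 absorbed by e(u)
  have h0z : S.add (S.mul (S.add S.one (S.e (S.u x))) S.zero) (S.e (S.u x)) = S.e (S.u x) := by
    have hd5 := S.dist (S.add S.one (S.e (S.u x))) S.zero (S.e (S.u x))
    rw [hez, zero_add S, hzeu] at hd5
    -- hd5 : z·0 + e u = (e u + (e u)·0) + E2
    rw [hE0abs'] at hd5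
    rw [hE2] at hd5
    exact hd5
  -- u·0 absorbed by e(u)
  have h0u : S.add (S.mul (S.u x) S.zero) (S.e (S.u x)) = S.e (S.u x) := by
    have hd8 := S.dist (S.u x) S.zero (S.e (S.u x))
    rw [zero_add S, hueu] at hd8
    rw [hE0abs'] at hd8
    rw [hE2] at hd8
    exact hd8
  -- z·a = u
  have hsza : S.mul (S.add S.one (S.e (S.u x))) a = S.u x := by
    have hd6 := S.dist (S.add S.one (S.e (S.u x))) a (S.e (S.u x))
    rw [hez, ← hda, hzeu, hzu, hEa, S.add_e (S.u x)] at hd6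
    -- hd6 : z·a + e u = u + E2
    have huE2 : S.add (S.u x) (S.mul (S.e (S.u x)) (S.e (S.u x))) = S.u x :=
      absorb_into S hE2'
    rw [huE2] at hd6
    -- hd6 : z·a + e u = u
    have he_za : S.e (S.mul (S.add S.one (S.e (S.u x))) a) = S.e (S.u x) := by
      have := S.e_mul (S.add S.one (S.e (S.u x))) a
      rw [hez, ha0, hEa] at this
      -- this : e(z·a) = e u + 0·z
      have habs : S.add (S.e (S.u x)) (S.mul S.zero (S.add S.one (S.e (S.u x))))
          = S.e (S.u x) := by
        rw [S.mul_comm S.zero (S.add S.one (S.e (S.u x))), S.add_comm]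
        exact h0z
      rw [habs] at this
      exact this
    have h13 := S.add_e (S.mul (S.add S.one (S.e (S.u x))) a)
    rw [he_za] at h13
    exact h13.symm.trans hd6
  -- u·a = u
  have hua : S.mul (S.u x) a = S.u x := by
    have hd7 := S.dist (S.u x) a (S.e (S.u x))
    rw [← hda, hueu, huu, hEa, S.add_e (S.u x)] at hd7
    have huE2 : S.add (S.u x) (S.mul (S.e (S.u x)) (S.e (S.u x))) = S.u x :=
      absorb_into S hE2'
    rw [huE2] at hd7
    have he_ua : S.e (S.mul (S.u x) a) = S.e (S.u x) := by
      have := S.e_mul (S.u x) a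
      rw [ha0, hEa] at this
      have habs : S.add (S.e (S.u x)) (S.mul S.zero (S.u x)) = S.e (S.u x) := by
        rw [S.mul_comm S.zero (S.u x), S.add_comm]
        exact h0u
      rw [habs] at this
      exact this
    have h14 := S.add_e (S.mul (S.u x) a)
    rw [he_ua] at h14
    exact h14.symm.trans hd7
  -- a zeroless
  have hane : a ≠ S.e a := by
    rw [ha0]
    intro h
    apply hu
    rw [h, zero_add S] at hda
    exact hda
  -- the dichotomy
  have hum := S.u_mul (S.add S.one (S.e (S.u x))) a hzne hane
  rw [hsza, hdu, hr] at hum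
  rcases hum with h | h
  · exact h
  · -- u = u(a) : then a = u, e u = 0, u precise idempotent, so u = 1
    have h14 := S.mul_u a hane
    rw [← h] at h14
    have hau : a = S.u x := by
      calc a = S.mul a (S.u x) := h14.symm
        _ = S.mul (S.u x) a := S.mul_comm _ _
        _ = S.u x := hua
    have heu0 : S.e (S.u x) = S.zero := by
      rw [← hau]
      exact ha0
    have := prec_idem S (S.u x) hone hu heu0 huu
    rw [heu0, S.add_zero]
    exact this
end
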